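/- arXiv:0901.2503 — 5 statements merged into one kernel-verified Lean document; each statement's English description precedes it below -/
import Mathlib

section
/- Let (ε_k)_{k∈ℤ} be a strong H-white noise and let (a_j)_{j∈ℕ} be bounded linear operators on H with Σ_{j=0}^∞ ‖a_j‖_∞ < ∞. Let X_k = Σ_{j=0}^∞ a_j(ε_{k−j}) and S_n = Σ_{k=1}^n X_k. Then the series Σ_{k=−∞}^{+∞} E⟨X_0, X_k⟩ converges absolutely and n · E‖S_n/n‖² → Σ_{k=−∞}^{+∞} E⟨X_0, X_k⟩ as n → ∞. -/
open MeasureTheory ProbabilityTheory Filter Topology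
open scoped InnerProductSpace

noncomputable section

variable {Ω : Type*} [MeasureSpace Ω] [IsProbabilityMeasure (ℙ : Measure Ω)]
variable {H : Type*} [NormedAddCommGroup H] [InnerProductSpace ℝ H] [CompleteSpace H]
  [SecondCountableTopology H] [MeasurableSpace H] [BorelSpace H]

/-- A strong `H`-white noise: a sequence of i.i.d. centered random elements of `H`
with finite strong second moment. -/
structure IsStrongWhiteNoise (ε : ℤ → Ω → H) : Prop where
  meas : ∀ k, Measurable (ε k)
  indep : iIndepFun ε ℙ
  ident : ∀ k, Measure.map (ε k) ℙ = Measure.map (ε 0) ℙ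
  centered : ∫ ω, ε 0 ω ∂ℙ = 0
  sqInt : MemLp (ε 0) 2 ℙ

lemma tendsto_Icc_int_atTop :
    Tendsto (fun n : ℕ => Finset.Icc (-(n : ℤ)) n) atTop atTop := by
  apply tendsto_atTop_finset_of_monotone
  · intro m n hmn
    apply Finset.Icc_subset_Icc <;> simp <;> omega
  · intro x
    refine ⟨x.natAbs, ?_⟩
    simp only [Finset.mem_Icc]
    omega

lemma Icc_int_succ (n : ℕ) :
    Finset.Icc (-(n + 1 : ℕ) : ℤ) ((n + 1 : ℕ) : ℤ)
      = insert (-(n + 1 : ℕ) : ℤ) (insert ((n + 1 : ℕ) : ℤ) (Finset.Icc (-(n : ℕ) : ℤ) n)) := by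
  ext x
  simp only [Finset.mem_Icc, Finset.mem_insert]
  omega

lemma sum_Icc_int_succ (c : ℤ → ℝ) (n : ℕ) :
    ∑ d ∈ Finset.Icc (-(n + 1 : ℕ) : ℤ) ((n + 1 : ℕ) : ℤ), c d
      = (∑ d ∈ Finset.Icc (-(n : ℕ) : ℤ) n, c d) + (c ((n : ℤ) + 1) + c (-((n : ℤ) + 1))) := by
  rw [Icc_int_succ]
  rw [Finset.sum_insert (by simp only [Finset.mem_insert, Finset.mem_Icc]; omega),
    Finset.sum_insert (by simp only [Finset.mem_Icc]; omega)]
  push_cast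
  ring

-- zero correlation of independent centered L¹ vectors
lemma indep_integral_inner_eq_zero {U V : Ω → H} (hU : Measurable U) (hV : Measurable V)
    (hUV : IndepFun U V ℙ) (hU1 : Integrable U ℙ) (hV1 : Integrable V ℙ)
    (hU0 : ∫ ω, U ω ∂ℙ = 0) :
    ∫ ω, ⟪U ω, V ω⟫_ℝ ∂ℙ = 0 := by
  have hmap : Measure.map (fun ω => (U ω, V ω)) ℙ
      = (Measure.map U ℙ).prod (Measure.map V ℙ) :=
    (indepFun_iff_map_prod_eq_prod_map_map hU.aemeasurable hV.aemeasurable).mp hUV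
  have hcont : Continuous fun p : H × H => ⟪p.1, p.2⟫_ℝ := continuous_inner
  have h1 : ∫ ω, ⟪U ω, V ω⟫_ℝ ∂ℙ
      = ∫ p : H × H, ⟪p.1, p.2⟫_ℝ ∂((Measure.map U ℙ).prod (Measure.map V ℙ)) := by
    rw [← hmap, integral_map (hU.prodMk hV).aemeasurable hcont.aestronglyMeasurable]
  have hIU : Integrable (fun x : H => x) (Measure.map U ℙ) :=
    (integrable_map_measure aestronglyMeasurable_id hU.aemeasurable).mpr hU1
  have hIV : Integrable (fun x : H => x) (Measure.map V ℙ) :=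
    (integrable_map_measure aestronglyMeasurable_id hV.aemeasurable).mpr hV1
  have hint : Integrable (fun p : H × H => ⟪p.1, p.2⟫_ℝ)
      ((Measure.map U ℙ).prod (Measure.map V ℙ)) := by
    have hb : Integrable (fun p : H × H => ‖p.1‖ * ‖p.2‖)
        ((Measure.map U ℙ).prod (Measure.map V ℙ)) := hIU.norm.mul_prod hIV.norm
    exact hb.mono hcont.aestronglyMeasurable
      (Filter.Eventually.of_forall fun p => by
        simpa using (norm_inner_le_norm (𝕜 := ℝ) p.1 p.2))
  rw [h1, integral_prod _ hint]
  have hU0' : ∫ x : H, x ∂(Measure.map U ℙ) = 0 := by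
    have : (∫ x : H, id x ∂(Measure.map U ℙ)) = ∫ ω, id (U ω) ∂ℙ :=
      integral_map hU.aemeasurable aestronglyMeasurable_id
    simpa using this.trans hU0
  calc ∫ u, ∫ v, ⟪u, v⟫_ℝ ∂(Measure.map V ℙ) ∂(Measure.map U ℙ)
      = ∫ u, ⟪u, ∫ v, v ∂(Measure.map V ℙ)⟫_ℝ ∂(Measure.map U ℙ) := by
        refine integral_congr_ae (Filter.Eventually.of_forall fun u => ?_)
        exact integral_inner hIV u
    _ = ∫ u, ⟪(∫ v, v ∂(Measure.map V ℙ)), u⟫_ℝ ∂(Measure.map U ℙ) := by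
        simp_rw [real_inner_comm]
    _ = ⟪(∫ v, v ∂(Measure.map V ℙ)), ∫ u, u ∂(Measure.map U ℙ)⟫_ℝ :=
        integral_inner hIU _
    _ = 0 := by rw [hU0']; exact inner_zero_right _

set_option maxHeartbeats 2000000 in
/-- under `Σ ‖a_j‖ < ∞`, the series `Σ_k E⟪X_0, X_k⟫` converges absolutely and
`n E‖S_n/n‖² → Σ_{k=-∞}^{∞} E⟪X_0, X_k⟫`. -/
theorem linear_process_mean_quadratic_rate
    (ε : ℤ → Ω → H) (hε : IsStrongWhiteNoise ε)
    (a : ℕ → H →L[ℝ] H) (ha : Summable fun j : ℕ => ‖a j‖)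
    (X : ℤ → Ω → H) (hXmeas : ∀ k, Measurable (X k))
    (hX : ∀ k : ℤ, ∀ᵐ ω ∂ℙ,
      Tendsto (fun m : ℕ => ∑ j ∈ Finset.range (m + 1), a j (ε (k - j) ω))
        atTop (𝓝 (X k ω))) :
    (Summable fun k : ℤ => |∫ ω, ⟪X 0 ω, X k ω⟫_ℝ ∂ℙ|) ∧
    Tendsto
      (fun n : ℕ =>
        (n : ℝ) * ∫ ω, ‖(n : ℝ)⁻¹ • ∑ k ∈ Finset.range n, X (k + 1) ω‖ ^ 2 ∂ℙ)
      atTop (𝓝 (∑' k : ℤ, ∫ ω, ⟪X 0 ω, X k ω⟫_ℝ ∂ℙ)) := by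
  classical
  -- ℤ-indexed operators
  set A : ℤ → H →L[ℝ] H := fun i => if 0 ≤ i then a i.toNat else 0 with hA
  have hAnat : ∀ j : ℕ, A (j : ℤ) = a j := fun j => by simp [hA]
  have hAsum : Summable fun i : ℤ => ‖A i‖ := by
    refine (Function.Injective.summable_iff (Nat.cast_injective : Function.Injective (Nat.cast : ℕ → ℤ)) ?_).mp ?_
    · intro i hi
      have : i < 0 := by
        rcases lt_or_ge i 0 with h | h
        · exact h
        · exact absurd ⟨i.toNat, by omega⟩ hi
      simp [hA, not_le.mpr this]
    · simpa [Function.comp_def, hAnat] using ha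
  -- all ε k are in L²
  have hmem : ∀ k : ℤ, MemLp (ε k) 2 ℙ := by
    intro k
    have h0 : MemLp (id : H → H) 2 (Measure.map (ε 0) ℙ) :=
      (memLp_map_measure_iff aestronglyMeasurable_id (hε.meas 0).aemeasurable).mpr hε.sqInt
    have hk : MemLp (id : H → H) 2 (Measure.map (ε k) ℙ) := by rw [hε.ident k]; exact h0
    exact (memLp_map_measure_iff aestronglyMeasurable_id (hε.meas k).aemeasurable).mp hk
  -- L² representatives
  set e : ℤ → Lp H 2 ℙ := fun k => (hmem k).toLp (ε k) with he
  have hecoe : ∀ k, e k =ᵐ[ℙ] ε k := fun k => (hmem k).coeFn_toLp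
  have henorm : ∀ k, ‖e k‖ = ‖e 0‖ := by
    intro k
    rw [he]
    simp only [Lp.norm_toLp]
    congr 1
    calc eLpNorm (ε k) 2 ℙ = eLpNorm (id ∘ ε k) 2 ℙ := rfl
      _ = eLpNorm (id : H → H) 2 (Measure.map (ε k) ℙ) :=
          (eLpNorm_map_measure aestronglyMeasurable_id (hε.meas k).aemeasurable).symm
      _ = eLpNorm (id : H → H) 2 (Measure.map (ε 0) ℙ) := by rw [hε.ident k]
      _ = eLpNorm (id ∘ ε 0) 2 ℙ :=
          eLpNorm_map_measure aestronglyMeasurable_id (hε.meas 0).aemeasurable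
      _ = eLpNorm (ε 0) 2 ℙ := rfl
  -- building blocks
  set G : ℤ → ℤ → Lp H 2 ℙ := fun k i => (A i).compLp (e (k - i)) with hG
  have hGnorm : ∀ k i, ‖G k i‖ ≤ ‖A i‖ * ‖e 0‖ := by
    intro k i
    calc ‖G k i‖ ≤ ‖A i‖ * ‖e (k - i)‖ := ContinuousLinearMap.norm_compLp_le _ _
      _ = ‖A i‖ * ‖e 0‖ := by rw [henorm]
  have hGsum : ∀ k, Summable (G k) := by
    intro k
    apply Summable.of_norm
    exact Summable.of_nonneg_of_le (fun i => norm_nonneg _) (hGnorm k) (hAsum.mul_right _)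
  set Xh : ℤ → Lp H 2 ℙ := fun k => ∑' i : ℤ, G k i with hXh
  have hXhsum : ∀ k, HasSum (G k) (Xh k) := fun k => (hGsum k).hasSum
  -- a.e. identification of X with Xh
  have hGcoe0 : ∀ k i : ℤ, (G k i : Ω → H) =ᵐ[ℙ] fun ω => A i (ε (k - i) ω) := by
    intro k i
    filter_upwards [(A i).coeFn_compLp (e (k - i)), hecoe (k - i)] with ω h1 h2
    rw [h2] at h1
    exact h1
  have hXae : ∀ k : ℤ, X k =ᵐ[ℙ] Xh k := by
    intro k
    have hvanish : ∀ i : ℤ, i ∉ Set.range ((↑) : ℕ → ℤ) → G k i = 0 := by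
      intro i hi
      have hneg : ¬(0 ≤ i) := fun h => hi ⟨i.toNat, by omega⟩
      have hA0 : ‖A i‖ = 0 := by
        rw [hA]
        simp [hneg]
      refine norm_le_zero_iff.mp ?_
      calc ‖G k i‖ ≤ ‖A i‖ * ‖e 0‖ := hGnorm k i
        _ = 0 := by rw [hA0, zero_mul]
    have hNat : HasSum (fun j : ℕ => G k (j : ℤ)) (Xh k) :=
      ((Function.Injective.hasSum_iff
        (Nat.cast_injective : Function.Injective (Nat.cast : ℕ → ℤ)) hvanish).mpr (hXhsum k))
    set P : ℕ → Lp H 2 ℙ := fun m => ∑ j ∈ Finset.range (m + 1), G k (j : ℤ) with hP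
    have htendLp : Tendsto P atTop (𝓝 (Xh k)) :=
      hNat.tendsto_sum_nat.comp (tendsto_add_atTop_nat 1)
    have hPcoe : ∀ m : ℕ, (P m : Ω → H) =ᵐ[ℙ]
        fun ω => ∑ j ∈ Finset.range (m + 1), a j (ε (k - j) ω) := by
      intro m
      have hgen : ∀ s : Finset ℕ, ((∑ j ∈ s, G k (j : ℤ) : Lp H 2 ℙ) : Ω → H) =ᵐ[ℙ]
          fun ω => ∑ j ∈ s, a j (ε (k - j) ω) := by
        intro s
        induction s using Finset.induction_on with
        | empty =>
          filter_upwards [Lp.coeFn_zero H 2 ℙ] with ω h1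
          simpa using h1
        | insert j s hnotmem ih =>
          rw [Finset.sum_insert hnotmem]
          filter_upwards [Lp.coeFn_add (G k (j : ℤ)) (∑ i ∈ s, G k (i : ℤ)), ih,
            hGcoe0 k (j : ℤ)] with ω h1 h2 h3
          rw [h1, Pi.add_apply, h2, h3, Finset.sum_insert hnotmem, hAnat]
      exact hgen (Finset.range (m + 1))
    have hmeasIn : TendstoInMeasure ℙ (fun m => (P m : Ω → H)) atTop (Xh k : Ω → H) :=
      tendstoInMeasure_of_tendsto_eLpNorm_of_ne_top two_ne_zero ENNReal.ofNat_ne_top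
        (fun m => Lp.aestronglyMeasurable _) (Lp.aestronglyMeasurable _)
        ((Lp.tendsto_Lp_iff_tendsto_eLpNorm' P (Xh k)).mp htendLp)
    obtain ⟨ns, hns, haesub⟩ := hmeasIn.exists_seq_tendsto_ae
    have hall : ∀ᵐ ω ∂ℙ, ∀ m : ℕ, (P m : Ω → H) ω
        = ∑ j ∈ Finset.range (m + 1), a j (ε (k - j) ω) :=
      ae_all_iff.mpr fun m => hPcoe m
    filter_upwards [haesub, hall, hX k] with ω h1 h2 h3
    have h4 : Tendsto (fun i => (P (ns i) : Ω → H) ω) atTop (𝓝 (X k ω)) := by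
      have h5 : Tendsto (fun i => ∑ j ∈ Finset.range (ns i + 1), a j (ε (k - j) ω))
          atTop (𝓝 (X k ω)) := h3.comp hns.tendsto_atTop
      refine h5.congr fun i => ?_
      rw [h2 (ns i)]
    exact tendsto_nhds_unique h4 h1
  -- covariance of blocks
  set B : ℤ → ℤ → ℝ := fun i j => ∫ ω, ⟪A i (ε 0 ω), A j (ε 0 ω)⟫_ℝ ∂ℙ with hB
  have hε0int : ∀ p : ℤ, Integrable (ε p) ℙ := fun p => (hmem p).integrable one_le_two
  have hεmean : ∀ p : ℤ, ∫ ω, ε p ω ∂ℙ = 0 := by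
    intro p
    have h1 : (∫ x : H, id x ∂(Measure.map (ε p) ℙ)) = ∫ ω, id (ε p ω) ∂ℙ :=
      integral_map (hε.meas p).aemeasurable aestronglyMeasurable_id
    have h2 : (∫ x : H, id x ∂(Measure.map (ε 0) ℙ)) = ∫ ω, id (ε 0 ω) ∂ℙ :=
      integral_map (hε.meas 0).aemeasurable aestronglyMeasurable_id
    have := hε.ident p
    simp only [id] at h1 h2
    rw [← h1, this, h2]
    exact hε.centered
  have hGcoe : ∀ k i : ℤ, (G k i : Ω → H) =ᵐ[ℙ] fun ω => A i (ε (k - i) ω) := by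
    intro k i
    filter_upwards [(A i).coeFn_compLp (e (k - i)), hecoe (k - i)] with ω h1 h2
    rw [h2] at h1
    exact h1
  have hGinner : ∀ k l i j : ℤ,
      ⟪G k i, G l j⟫_ℝ = if k - i = l - j then B i j else 0 := by
    intro k l i j
    have hid : ⟪G k i, G l j⟫_ℝ = ∫ ω, ⟪A i (ε (k - i) ω), A j (ε (l - j) ω)⟫_ℝ ∂ℙ := by
      rw [L2.inner_def]
      refine integral_congr_ae ?_
      filter_upwards [hGcoe k i, hGcoe l j] with ω h1 h2
      rw [h1, h2]
    by_cases hd : k - i = l - j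
    · rw [if_pos hd, hid, hd]
      have hcont : Continuous fun x : H => ⟪A i x, A j x⟫_ℝ :=
        (A i).continuous.inner (A j).continuous
      have h1 : (∫ x, ⟪A i x, A j x⟫_ℝ ∂(Measure.map (ε (l - j)) ℙ))
          = ∫ ω, ⟪A i (ε (l - j) ω), A j (ε (l - j) ω)⟫_ℝ ∂ℙ :=
        integral_map (hε.meas _).aemeasurable hcont.aestronglyMeasurable
      have h2 : (∫ x, ⟪A i x, A j x⟫_ℝ ∂(Measure.map (ε 0) ℙ))
          = ∫ ω, ⟪A i (ε 0 ω), A j (ε 0 ω)⟫_ℝ ∂ℙ :=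
        integral_map (hε.meas 0).aemeasurable hcont.aestronglyMeasurable
      rw [← h1, hε.ident (l - j), h2]
    · rw [if_neg hd, hid]
      have hne : (k - i) ≠ (l - j) := hd
      have hUV : IndepFun (fun ω => A i (ε (k - i) ω)) (fun ω => A j (ε (l - j) ω)) ℙ :=
        (hε.indep.indepFun hne).comp (A i).measurable (A j).measurable
      refine indep_integral_inner_eq_zero
        ((A i).measurable.comp (hε.meas _)) ((A j).measurable.comp (hε.meas _)) hUV
        ?_ ?_ ?_
      · exact ((A i).comp_memLp' (hmem _)).integrable one_le_two
      · exact ((A j).comp_memLp' (hmem _)).integrable one_le_two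
      · rw [ContinuousLinearMap.integral_comp_comm _ (hε0int (k - i)), hεmean, map_zero]
  set c : ℤ → ℝ := fun d => ∑' i : ℤ, B i (i + d) with hc
  have hXhinner : ∀ k l : ℤ, ⟪Xh k, Xh l⟫_ℝ = c (l - k) := by
    intro k l
    have houter : HasSum (fun i => ⟪G k i, Xh l⟫_ℝ) ⟪Xh k, Xh l⟫_ℝ := by
      have := (hXhsum k).map ((innerSL ℝ (E := Lp H 2 ℙ)).flip (Xh l))
        ((innerSL ℝ (E := Lp H 2 ℙ)).flip (Xh l)).continuous
      exact this
    have hinner_i : ∀ i : ℤ, ⟪G k i, Xh l⟫_ℝ = B i (i + (l - k)) := by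
      intro i
      have h2 : HasSum (fun j => ⟪G k i, G l j⟫_ℝ) ⟪G k i, Xh l⟫_ℝ := by
        have := (hXhsum l).map (innerSL ℝ (G k i)) (innerSL ℝ (G k i)).continuous
        exact this
      rw [← h2.tsum_eq, tsum_eq_single (i + (l - k))]
      · rw [hGinner, if_pos (by ring)]
      · intro j hj
        rw [hGinner, if_neg fun hcon => hj (by omega)]
    calc ⟪Xh k, Xh l⟫_ℝ = ∑' i, ⟪G k i, Xh l⟫_ℝ := houter.tsum_eq.symm
      _ = ∑' i, B i (i + (l - k)) := tsum_congr hinner_i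
      _ = c (l - k) := rfl
  have hinner : ∀ k l : ℤ, (∫ ω, ⟪X k ω, X l ω⟫_ℝ ∂ℙ) = c (l - k) := by
    intro k l
    rw [← hXhinner k l, L2.inner_def]
    refine integral_congr_ae ?_
    filter_upwards [hXae k, hXae l] with ω h1 h2
    rw [h1, h2]
  -- summability bounds
  set σ2 : ℝ := ∫ ω, ‖ε 0 ω‖ ^ 2 ∂ℙ with hσ2
  have hσ2nonneg : 0 ≤ σ2 := integral_nonneg fun ω => by positivity
  have hsqint : Integrable (fun ω => ‖ε 0 ω‖ ^ 2) ℙ := by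
    have h := hε.sqInt.integrable_norm_rpow two_ne_zero ENNReal.ofNat_ne_top
    simp only [ENNReal.toReal_ofNat] at h
    have h2 : ∀ x : ℝ, 0 ≤ x → x ^ (2 : ℝ) = x ^ 2 := fun x hx => by
      rw [show (2 : ℝ) = ((2 : ℕ) : ℝ) by norm_num, Real.rpow_natCast]
    refine h.congr (Filter.Eventually.of_forall fun ω => ?_)
    exact h2 _ (norm_nonneg _)
  have hBle : ∀ i j : ℤ, |B i j| ≤ ‖A i‖ * ‖A j‖ * σ2 := by
    intro i j
    have hg : Integrable (fun ω => (‖A i‖ * ‖A j‖) * ‖ε 0 ω‖ ^ 2) ℙ := hsqint.const_mul _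
    have hbd : ∀ ω, ‖⟪A i (ε 0 ω), A j (ε 0 ω)⟫_ℝ‖ ≤ (‖A i‖ * ‖A j‖) * ‖ε 0 ω‖ ^ 2 := by
      intro ω
      calc ‖⟪A i (ε 0 ω), A j (ε 0 ω)⟫_ℝ‖ ≤ ‖A i (ε 0 ω)‖ * ‖A j (ε 0 ω)‖ :=
            norm_inner_le_norm _ _
        _ ≤ (‖A i‖ * ‖ε 0 ω‖) * (‖A j‖ * ‖ε 0 ω‖) :=
            mul_le_mul ((A i).le_opNorm _) ((A j).le_opNorm _) (norm_nonneg _)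
              (by positivity)
        _ = (‖A i‖ * ‖A j‖) * ‖ε 0 ω‖ ^ 2 := by ring
    have := norm_integral_le_of_norm_le hg (Filter.Eventually.of_forall hbd)
    calc |B i j| ≤ ∫ ω, (‖A i‖ * ‖A j‖) * ‖ε 0 ω‖ ^ 2 ∂ℙ := this
      _ = ‖A i‖ * ‖A j‖ * σ2 := by rw [integral_const_mul]
  have hprod2 : Summable fun p : ℤ × ℤ => ‖A p.2‖ * ‖A (p.2 + p.1)‖ := by
    have hprod : Summable fun p : ℤ × ℤ => ‖A p.1‖ * ‖A p.2‖ :=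
      Summable.mul_of_nonneg hAsum hAsum (fun _ => norm_nonneg _) fun _ => norm_nonneg _
    have hinj : Function.Injective fun p : ℤ × ℤ => ((p.2, p.2 + p.1) : ℤ × ℤ) := by
      intro p q hpq
      simp only [Prod.mk.injEq, Prod.ext_iff] at hpq ⊢
      omega
    exact (hprod.comp_injective hinj).congr fun p => rfl
  have hslice : ∀ d : ℤ, Summable fun i : ℤ => ‖A i‖ * ‖A (i + d)‖ := fun d =>
    hprod2.prod_factor d
  have hm : Summable fun d : ℤ => ∑' i : ℤ, ‖A i‖ * ‖A (i + d)‖ := hprod2.prod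
  have habsB : ∀ d : ℤ, Summable fun i : ℤ => |B i (i + d)| := by
    intro d
    exact Summable.of_nonneg_of_le (fun i => abs_nonneg _) (fun i => hBle i (i + d))
      ((hslice d).mul_right σ2)
  have hcabs : Summable fun d : ℤ => |c d| := by
    refine Summable.of_nonneg_of_le (fun d => abs_nonneg _) (fun d => ?_)
      (hm.mul_right σ2)
    have h1 : |c d| ≤ ∑' i : ℤ, |B i (i + d)| := by
      simpa [Real.norm_eq_abs] using norm_tsum_le_tsum_norm
        (f := fun i : ℤ => B i (i + d)) (by simpa [Real.norm_eq_abs] using habsB d)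
    have h2 : (∑' i : ℤ, |B i (i + d)|) ≤ ∑' i : ℤ, ‖A i‖ * ‖A (i + d)‖ * σ2 :=
      Summable.tsum_le_tsum (fun i => hBle i (i + d)) (habsB d) ((hslice d).mul_right σ2)
    have h3 : (∑' i : ℤ, ‖A i‖ * ‖A (i + d)‖ * σ2)
        = (∑' i : ℤ, ‖A i‖ * ‖A (i + d)‖) * σ2 := by
      simp_rw [← tsum_mul_right]
    linarith
  have hcsum : Summable c := hcabs.of_abs
  -- partial sums
  constructor
  · exact hcabs.congr fun k => by rw [hinner 0 k, sub_zero]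
  · set b : ℕ → ℝ := fun n => ∑ d ∈ Finset.Icc (-(n : ℤ)) (n : ℤ), c d with hb
    have hbtend : Tendsto b atTop (𝓝 (∑' d : ℤ, c d)) :=
      hcsum.hasSum.comp tendsto_Icc_int_atTop
    set Sh : ℕ → Lp H 2 ℙ := fun n => ∑ k ∈ Finset.range n, Xh (k + 1) with hSh
    set T : ℕ → ℝ := fun n => ⟪Sh n, Sh n⟫_ℝ with hT
    have hbn : ∀ n : ℕ, b n = c 0 + ∑ j ∈ Finset.range n, (c ((j : ℤ) + 1) + c (-((j : ℤ) + 1))) := by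
      intro n
      induction n with
      | zero => simp [hb]
      | succ n ih =>
        have h1 : b (n + 1) = b n + (c ((n : ℤ) + 1) + c (-((n : ℤ) + 1))) := by
          rw [hb]
          simpa using sum_Icc_int_succ c n
        rw [h1, ih, Finset.sum_range_succ]
        ring
    have hTsucc : ∀ n : ℕ, T (n + 1) = T n + b n := by
      intro n
      have hx : Sh (n + 1) = Sh n + Xh ((n : ℤ) + 1) := by
        rw [hSh]
        simp [Finset.sum_range_succ]
      have e1 : ∀ k ∈ Finset.range n, ⟪Xh ((k : ℤ) + 1), Xh ((n : ℤ) + 1)⟫_ℝ = c ((n : ℤ) - k) := by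
        intro k _
        rw [hXhinner]
        congr 1
        ring
      have e2 : ∀ k ∈ Finset.range n, ⟪Xh ((n : ℤ) + 1), Xh ((k : ℤ) + 1)⟫_ℝ = c ((k : ℤ) - n) := by
        intro k _
        rw [hXhinner]
        congr 1
        ring
      have e3 : ⟪Xh ((n : ℤ) + 1), Xh ((n : ℤ) + 1)⟫_ℝ = c 0 := by
        rw [hXhinner]
        congr 1
        ring
      have hs1 : ⟪Sh n, Xh ((n : ℤ) + 1)⟫_ℝ = ∑ k ∈ Finset.range n, c ((n : ℤ) - k) := by
        have : Sh n = ∑ k ∈ Finset.range n, Xh ((k : ℤ) + 1) := rfl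
        rw [this, sum_inner]
        exact Finset.sum_congr rfl e1
      have hs2 : ⟪Xh ((n : ℤ) + 1), Sh n⟫_ℝ = ∑ k ∈ Finset.range n, c ((k : ℤ) - n) := by
        have : Sh n = ∑ k ∈ Finset.range n, Xh ((k : ℤ) + 1) := rfl
        rw [this, inner_sum]
        exact Finset.sum_congr rfl e2
      have h2 : T (n + 1) = T n + (∑ k ∈ Finset.range n, c ((n : ℤ) - k))
          + ((∑ k ∈ Finset.range n, c ((k : ℤ) - n)) + c 0) := by
        have hTdef : ∀ m, T m = ⟪Sh m, Sh m⟫_ℝ := fun m => rfl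
        rw [hTdef, hTdef, hx, inner_add_left, inner_add_right, inner_add_right, hs1, hs2, e3]
      have hr1 : (∑ k ∈ Finset.range n, c ((n : ℤ) - k))
          = ∑ j ∈ Finset.range n, c ((j : ℤ) + 1) := by
        rw [← Finset.sum_range_reflect (fun j => c ((j : ℤ) + 1)) n]
        refine Finset.sum_congr rfl fun k hk => ?_
        have hk' : k < n := Finset.mem_range.mp hk
        congr 1
        omega
      have hr2 : (∑ k ∈ Finset.range n, c ((k : ℤ) - n))
          = ∑ j ∈ Finset.range n, c (-((j : ℤ) + 1)) := by
        rw [← Finset.sum_range_reflect (fun j => c (-((j : ℤ) + 1))) n]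
        refine Finset.sum_congr rfl fun k hk => ?_
        have hk' : k < n := Finset.mem_range.mp hk
        congr 1
        omega
      rw [h2, hr1, hr2, hbn n, Finset.sum_add_distrib]
      ring
    have hT0 : ∀ n : ℕ, T n = ∑ j ∈ Finset.range n, b j := by
      intro n
      induction n with
      | zero =>
        rw [hT]
        simp [hSh]
      | succ n ih => rw [hTsucc n, ih, Finset.sum_range_succ]
    have hShae : ∀ n : ℕ, (fun ω => ∑ k ∈ Finset.range n, X (k + 1) ω) =ᵐ[ℙ] Sh n := by
      intro n
      induction n with
      | zero =>
        filter_upwards [Lp.coeFn_zero H 2 ℙ] with ω h1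
        simpa [hSh] using h1.symm
      | succ n ih =>
        have hadd : (Sh (n + 1) : Ω → H) =ᵐ[ℙ] (Sh n : Ω → H) + (Xh ((n : ℤ) + 1) : Ω → H) := by
          have hx : Sh (n + 1) = Sh n + Xh ((n : ℤ) + 1) := by
            rw [hSh]
            simp [Finset.sum_range_succ]
          rw [hx]
          exact Lp.coeFn_add _ _
        filter_upwards [hadd, ih, hXae ((n : ℤ) + 1)] with ω h1 h2 h3
        rw [Finset.sum_range_succ, h1, Pi.add_apply, h2, ← h3]
    have heq : ∀ n : ℕ,
        (n : ℝ) * ∫ ω, ‖(n : ℝ)⁻¹ • ∑ k ∈ Finset.range n, X (k + 1) ω‖ ^ 2 ∂ℙ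
          = (n : ℝ)⁻¹ * ∑ j ∈ Finset.range n, b j := by
      intro n
      have hstep1 : (∫ ω, ‖(n : ℝ)⁻¹ • ∑ k ∈ Finset.range n, X (k + 1) ω‖ ^ 2 ∂ℙ)
          = ((n : ℝ)⁻¹) ^ 2 * ∫ ω, ‖(Sh n : Ω → H) ω‖ ^ 2 ∂ℙ := by
        rw [← integral_const_mul]
        refine integral_congr_ae ?_
        filter_upwards [hShae n] with ω h1
        rw [h1, norm_smul, mul_pow]
        simp [sq_abs]
      have hstep2 : (∫ ω, ‖(Sh n : Ω → H) ω‖ ^ 2 ∂ℙ) = T n := by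
        have hTdef : T n = ⟪Sh n, Sh n⟫_ℝ := rfl
        rw [hTdef, L2.inner_def]
        refine (integral_congr_ae ?_).symm
        refine Filter.Eventually.of_forall fun ω => ?_
        exact real_inner_self_eq_norm_sq _
      rw [hstep1, hstep2, ← hT0 n]
      rcases Nat.eq_zero_or_pos n with hn | hn
      · subst hn
        simp [hT0]
      · have hn' : ((n : ℝ)) ≠ 0 := Nat.cast_ne_zero.mpr hn.ne'
        field_simp
    have htsum : (∑' k : ℤ, ∫ ω, ⟪X 0 ω, X k ω⟫_ℝ ∂ℙ) = ∑' d : ℤ, c d :=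
      tsum_congr fun k => by rw [hinner 0 k, sub_zero]
    rw [htsum]
    exact hbtend.cesaro.congr fun n => (heq n).symm
end
end

section
/- Let (ε_k)_{k∈ℤ} be a strong H-white noise and let (a_j)_{j∈ℕ} be bounded linear operators on H with Σ_{j=0}^∞ ‖a_j‖_∞ < ∞. Let X_k = Σ_{j=0}^∞ a_j(ε_{k−j}) and S_n = Σ_{k=1}^n X_k. Then for every δ > 0, (n^{1/4} / (log n)^{1/2+δ}) · ‖S_n/n‖ → 0 almost surely as n → ∞. -/
open MeasureTheory ProbabilityTheory Filter Topology
open scoped InnerProductSpace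
open scoped ENNReal

noncomputable section

variable {Ω : Type*} [MeasureSpace Ω] [IsProbabilityMeasure (ℙ : Measure Ω)]
variable {H : Type*} [NormedAddCommGroup H] [InnerProductSpace ℝ H] [CompleteSpace H]
  [SecondCountableTopology H] [MeasurableSpace H] [BorelSpace H]

lemma aux_ofReal_norm_eq_coe_nnnorm {E : Type*} [SeminormedAddGroup E] (x : E) :
    ENNReal.ofReal ‖x‖ = (‖x‖₊ : ℝ≥0∞) := ENNReal.ofReal_eq_coe_nnreal _

lemma aux_bertrand {q : ℝ} (hq : 1 < q) :
    Summable (fun n : ℕ => (((n : ℝ) + 2) * Real.log ((n : ℝ) + 2) ^ q)⁻¹) := by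
  have hq0 : 0 ≤ q := by linarith
  set F : ℕ → ℝ := fun n => (((n : ℝ) + 1) * Real.log ((n : ℝ) + 1) ^ q)⁻¹ with hF
  have hF_nonneg : ∀ n, 0 ≤ F n := by
    intro n
    have h1 : (0:ℝ) ≤ (n : ℝ) + 1 := by positivity
    have h2 : (0:ℝ) ≤ Real.log ((n : ℝ) + 1) := Real.log_nonneg (by push_cast; linarith)
    positivity
  have hF_mono : ∀ ⦃m n : ℕ⦄, 0 < m → m ≤ n → F n ≤ F m := by
    intro m n hm hmn
    have hm1 : (1:ℝ) ≤ (m:ℝ) := by exact_mod_cast hm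
    have hmn' : (m:ℝ) ≤ (n:ℝ) := by exact_mod_cast hmn
    have hlogm : 0 < Real.log ((m:ℝ) + 1) := Real.log_pos (by linarith)
    have hposm : 0 < ((m:ℝ) + 1) * Real.log ((m:ℝ) + 1) ^ q := by positivity
    apply inv_anti₀ hposm
    have hlog : Real.log ((m:ℝ) + 1) ≤ Real.log ((n:ℝ) + 1) :=
      Real.log_le_log (by linarith) (by linarith)
    have := Real.rpow_le_rpow hlogm.le hlog hq0
    have hn1 : (m:ℝ) + 1 ≤ (n:ℝ) + 1 := by linarith
    exact mul_le_mul hn1 this (by positivity) (by linarith)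
  have hcond : Summable (fun k : ℕ => (2:ℝ) ^ k * F (2 ^ k)) := by
    rw [← summable_nat_add_iff 1]
    have hsum : Summable (fun k : ℕ => (Real.log 2 ^ q)⁻¹ * (((k:ℝ) + 1) ^ q)⁻¹) := by
      apply Summable.mul_left
      have : Summable (fun k : ℕ => ((k:ℝ) ^ q)⁻¹) := Real.summable_nat_rpow_inv.mpr hq
      have h := (summable_nat_add_iff 1).mpr this
      refine h.congr fun k => ?_
      push_cast
      ring_nf
    refine Summable.of_nonneg_of_le (fun k => ?_) (fun k => ?_) hsum
    · have := hF_nonneg (2 ^ (k + 1))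
      positivity
    · -- 2^(k+1) * F (2^(k+1)) ≤ (log 2 ^ q)⁻¹ * ((k+1)^q)⁻¹
      set N : ℕ := 2 ^ (k + 1) with hN
      have hN2 : ((N:ℝ)) = 2 ^ (k+1) := by
        rw [hN]; push_cast [pow_succ]; ring
      have hNpos : (0:ℝ) < N := by positivity
      have hlogN : Real.log ((N:ℝ) + 1) ≥ ((k:ℝ) + 1) * Real.log 2 := by
        calc ((k:ℝ) + 1) * Real.log 2 = Real.log (2 ^ (k+1) : ℝ) := by
              rw [Real.log_pow]; push_cast; ring
          _ ≤ Real.log ((N:ℝ) + 1) := Real.log_le_log (by positivity) (by rw [hN2]; linarith)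
      have hlog2 : 0 < Real.log 2 := Real.log_pos one_lt_two
      have hlogNpos : 0 < ((k:ℝ) + 1) * Real.log 2 := by positivity
      have hrpow : (((k:ℝ) + 1) * Real.log 2) ^ q ≤ Real.log ((N:ℝ) + 1) ^ q :=
        Real.rpow_le_rpow hlogNpos.le hlogN hq0
      have hmulrpow : (((k:ℝ) + 1) * Real.log 2) ^ q = ((k:ℝ)+1) ^ q * Real.log 2 ^ q :=
        Real.mul_rpow (by positivity) hlog2.le
      have key : (2:ℝ) ^ (k+1) * F N ≤ (((k:ℝ)+1) ^ q * Real.log 2 ^ q)⁻¹ := by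
        rw [hF]
        have hden : 0 < ((N:ℝ) + 1) * Real.log ((N:ℝ) + 1) ^ q := by
          have : (1:ℝ) < (N:ℝ) + 1 := by linarith
          have := Real.log_pos this
          positivity
        rw [← hmulrpow]
        calc (2:ℝ) ^ (k+1) * (((N:ℝ) + 1) * Real.log ((N:ℝ) + 1) ^ q)⁻¹
            ≤ ((N:ℝ) + 1) * (((N:ℝ) + 1) * Real.log ((N:ℝ) + 1) ^ q)⁻¹ := by
              apply mul_le_mul_of_nonneg_right _ (by positivity)
              rw [hN2]; linarith
          _ = (Real.log ((N:ℝ) + 1) ^ q)⁻¹ := by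
              rw [mul_inv, ← mul_assoc, mul_inv_cancel₀ (by positivity), one_mul]
          _ ≤ ((((k:ℝ) + 1) * Real.log 2) ^ q)⁻¹ := by
              apply inv_anti₀ (by positivity) hrpow
      calc (2:ℝ) ^ (k+1) * F (2 ^ (k+1)) = (2:ℝ) ^ (k+1) * F N := by rw [hN]
        _ ≤ (((k:ℝ)+1) ^ q * Real.log 2 ^ q)⁻¹ := key
        _ = (Real.log 2 ^ q)⁻¹ * (((k:ℝ) + 1) ^ q)⁻¹ := by
            rw [mul_inv]; ring
  have hFsum : Summable F := (summable_condensed_iff_of_nonneg hF_nonneg hF_mono).mp hcond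
  have := (summable_nat_add_iff 1).mpr hFsum
  refine this.congr fun n => ?_
  simp only [hF]
  push_cast
  ring_nf


lemma aux_indep_integral_inner {Ω : Type*} {mΩ : MeasurableSpace Ω} {μ : Measure Ω}
    [IsProbabilityMeasure μ]
    {H : Type*} [NormedAddCommGroup H] [InnerProductSpace ℝ H] [CompleteSpace H]
    [SecondCountableTopology H] [MeasurableSpace H] [BorelSpace H]
    {ξ η : Ω → H} (h : IndepFun ξ η μ) (hξm : AEMeasurable ξ μ) (hηm : AEMeasurable η μ)
    (hξi : Integrable ξ μ) (hηi : Integrable η μ) :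
    ∫ ω, ⟪ξ ω, η ω⟫_ℝ ∂μ = ⟪∫ ω, ξ ω ∂μ, ∫ ω, η ω ∂μ⟫_ℝ := by
  have hmap : Measure.map (fun ω => (ξ ω, η ω)) μ = (μ.map ξ).prod (μ.map η) :=
    (indepFun_iff_map_prod_eq_prod_map_map hξm hηm).mp h
  have hpm : AEMeasurable (fun ω => (ξ ω, η ω)) μ := hξm.prodMk hηm
  have hcont : Continuous fun p : H × H => ⟪p.1, p.2⟫_ℝ := continuous_inner
  have hξn : Integrable (fun x : H => ‖x‖) (μ.map ξ) := by
    rw [integrable_map_measure continuous_norm.aestronglyMeasurable hξm]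
    exact hξi.norm
  have hηn : Integrable (fun x : H => ‖x‖) (μ.map η) := by
    rw [integrable_map_measure continuous_norm.aestronglyMeasurable hηm]
    exact hηi.norm
  have hξid : Integrable (fun x : H => x) (μ.map ξ) := by
    exact (integrable_map_measure aestronglyMeasurable_id hξm).mpr hξi
  have hηid : Integrable (fun x : H => x) (μ.map η) := by
    exact (integrable_map_measure aestronglyMeasurable_id hηm).mpr hηi
  have hprodint : Integrable (fun p : H × H => ⟪p.1, p.2⟫_ℝ) ((μ.map ξ).prod (μ.map η)) := by
    refine Integrable.mono (hξn.mul_prod hηn) hcont.aestronglyMeasurable ?_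
    refine Eventually.of_forall fun p => ?_
    rw [Real.norm_eq_abs, Real.norm_eq_abs]
    exact (abs_real_inner_le_norm _ _).trans (le_abs_self _)
  have hmξ : ∫ x, x ∂(μ.map ξ) = ∫ ω, ξ ω ∂μ := integral_map hξm aestronglyMeasurable_id
  have hmη : ∫ x, x ∂(μ.map η) = ∫ ω, η ω ∂μ := integral_map hηm aestronglyMeasurable_id
  calc ∫ ω, ⟪ξ ω, η ω⟫_ℝ ∂μ
      = ∫ p, ⟪p.1, p.2⟫_ℝ ∂(Measure.map (fun ω => (ξ ω, η ω)) μ) :=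
        (integral_map hpm (hcont.aestronglyMeasurable.mono_measure le_rfl)).symm
    _ = ∫ p, ⟪p.1, p.2⟫_ℝ ∂((μ.map ξ).prod (μ.map η)) := by rw [hmap]
    _ = ∫ x, ∫ y, ⟪x, y⟫_ℝ ∂(μ.map η) ∂(μ.map ξ) := integral_prod _ hprodint
    _ = ∫ x, ⟪x, ∫ y, y ∂(μ.map η)⟫_ℝ ∂(μ.map ξ) := by
        refine integral_congr_ae (Eventually.of_forall fun x => ?_)
        exact integral_inner hηid x
    _ = ∫ x, ⟪∫ y, y ∂(μ.map η), x⟫_ℝ ∂(μ.map ξ) :=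
        integral_congr_ae (Eventually.of_forall fun x => real_inner_comm _ _)
    _ = ⟪∫ y, y ∂(μ.map η), ∫ x, x ∂(μ.map ξ)⟫_ℝ := integral_inner hξid _
    _ = ⟪∫ x, x ∂(μ.map ξ), ∫ y, y ∂(μ.map η)⟫_ℝ := real_inner_comm _ _
    _ = ⟪∫ ω, ξ ω ∂μ, ∫ ω, η ω ∂μ⟫_ℝ := by rw [hmξ, hmη]


lemma aux_inner_integrable {u v : Ω → H} (hu : MemLp u 2 ℙ) (hv : MemLp v 2 ℙ) :
    Integrable (fun ω => ⟪u ω, v ω⟫_ℝ) ℙ := by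
  have h := MeasureTheory.L2.integrable_inner (𝕜 := ℝ) (hu.toLp u) (hv.toLp v)
  refine h.congr ?_
  filter_upwards [hu.coeFn_toLp, hv.coeFn_toLp] with ω h1 h2
  rw [h1, h2]

lemma aux_sq_bound (ε : ℤ → Ω → H) (hε : IsStrongWhiteNoise ε)
    (a : ℕ → H →L[ℝ] H) (ha : Summable fun j : ℕ => ‖a j‖)
    (s : Finset ℤ) (m : ℕ) :
    ∫ ω, ‖∑ p ∈ s ×ˢ Finset.range (m + 1), a p.2 (ε (p.1 - (p.2 : ℤ)) ω)‖ ^ 2 ∂ℙ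
      ≤ s.card * (∑' j, ‖a j‖) ^ 2 * ∫ ω, ‖ε 0 ω‖ ^ 2 ∂ℙ := by
  set A : ℝ := ∑' j, ‖a j‖ with hA
  set V : ℝ := ∫ ω, ‖ε 0 ω‖ ^ 2 ∂ℙ with hV
  have hV0 : 0 ≤ V := integral_nonneg fun ω => by positivity
  have idd : ∀ l : ℤ, IdentDistrib (ε l) (ε 0) ℙ ℙ :=
    fun l => ⟨(hε.meas l).aemeasurable, (hε.meas 0).aemeasurable, hε.ident l⟩
  have memL : ∀ l : ℤ, MemLp (ε l) 2 ℙ := fun l => (idd l).symm.memLp_snd hε.sqInt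
  have meanL : ∀ l : ℤ, ∫ ω, ε l ω ∂ℙ = 0 := fun l => (idd l).integral_eq.trans hε.centered
  have VL : ∀ l : ℤ, ∫ ω, ‖ε l ω‖ ^ 2 ∂ℙ = V := by
    intro l
    exact ((idd l).comp (measurable_norm.pow_const 2)).integral_eq
  have intSq : ∀ l : ℤ, Integrable (fun ω => ‖ε l ω‖ ^ 2) ℙ := by
    intro l
    have h := (memL l).integrable_norm_rpow two_ne_zero ENNReal.ofNat_ne_top
    refine h.congr (Eventually.of_forall fun ω => ?_)
    have h2 : ((2:ℝ≥0∞).toReal) = ((2:ℕ):ℝ) := by simp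
    simp only [h2, Real.rpow_natCast]
  set g : ℤ × ℕ → Ω → H := fun p ω => a p.2 (ε (p.1 - (p.2 : ℤ)) ω) with hg
  have memG : ∀ p : ℤ × ℕ, MemLp (g p) 2 ℙ := fun p => (a p.2).comp_memLp' (memL _)
  have intInner : ∀ p q : ℤ × ℕ, Integrable (fun ω => ⟪g p ω, g q ω⟫_ℝ) ℙ :=
    fun p q => aux_inner_integrable (memG p) (memG q)
  set t := s ×ˢ Finset.range (m + 1) with ht
  have step1 : ∫ ω, ‖∑ p ∈ t, g p ω‖ ^ 2 ∂ℙ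
      = ∑ p ∈ t, ∑ q ∈ t, ∫ ω, ⟪g p ω, g q ω⟫_ℝ ∂ℙ := by
    have hpt : ∀ ω, ‖∑ p ∈ t, g p ω‖ ^ 2 = ∑ p ∈ t, ∑ q ∈ t, ⟪g p ω, g q ω⟫_ℝ := by
      intro ω
      rw [← real_inner_self_eq_norm_sq, sum_inner]
      exact Finset.sum_congr rfl fun p _ => inner_sum _ _ _
    calc ∫ ω, ‖∑ p ∈ t, g p ω‖ ^ 2 ∂ℙ
        = ∫ ω, ∑ p ∈ t, ∑ q ∈ t, ⟪g p ω, g q ω⟫_ℝ ∂ℙ := by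
          exact integral_congr_ae (Eventually.of_forall hpt)
      _ = ∑ p ∈ t, ∫ ω, ∑ q ∈ t, ⟪g p ω, g q ω⟫_ℝ ∂ℙ :=
          integral_finset_sum t fun p _ => integrable_finset_sum t fun q _ => intInner p q
      _ = ∑ p ∈ t, ∑ q ∈ t, ∫ ω, ⟪g p ω, g q ω⟫_ℝ ∂ℙ :=
          Finset.sum_congr rfl fun p _ => integral_finset_sum t fun q _ => intInner p q
  have step2 : ∀ p q : ℤ × ℕ, ∫ ω, ⟪g p ω, g q ω⟫_ℝ ∂ℙ
      ≤ (if q.1 = p.1 - (p.2 : ℤ) + q.2 then ‖a p.2‖ * ‖a q.2‖ * V else 0) := by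
    intro p q
    by_cases hc : q.1 = p.1 - (p.2 : ℤ) + q.2
    · rw [if_pos hc]
      have hl : q.1 - (q.2 : ℤ) = p.1 - (p.2 : ℤ) := by omega
      have hb : ∀ ω, ⟪g p ω, g q ω⟫_ℝ ≤ ‖a p.2‖ * ‖a q.2‖ * ‖ε (p.1 - (p.2:ℤ)) ω‖ ^ 2 := by
        intro ω
        have h1 : ⟪g p ω, g q ω⟫_ℝ ≤ ‖g p ω‖ * ‖g q ω‖ := real_inner_le_norm _ _
        have h2 : ‖g p ω‖ ≤ ‖a p.2‖ * ‖ε (p.1 - (p.2:ℤ)) ω‖ := (a p.2).le_opNorm _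
        have h3 : ‖g q ω‖ ≤ ‖a q.2‖ * ‖ε (p.1 - (p.2:ℤ)) ω‖ := by
          simp only [hg, hl]
          exact (a q.2).le_opNorm _
        calc ⟪g p ω, g q ω⟫_ℝ ≤ ‖g p ω‖ * ‖g q ω‖ := h1
          _ ≤ (‖a p.2‖ * ‖ε (p.1 - (p.2:ℤ)) ω‖) * (‖a q.2‖ * ‖ε (p.1 - (p.2:ℤ)) ω‖) :=
              mul_le_mul h2 h3 (norm_nonneg _) (by positivity)
          _ = ‖a p.2‖ * ‖a q.2‖ * ‖ε (p.1 - (p.2:ℤ)) ω‖ ^ 2 := by ring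
      calc ∫ ω, ⟪g p ω, g q ω⟫_ℝ ∂ℙ
          ≤ ∫ ω, ‖a p.2‖ * ‖a q.2‖ * ‖ε (p.1 - (p.2:ℤ)) ω‖ ^ 2 ∂ℙ :=
            integral_mono (intInner p q) (((intSq _).const_mul _)) hb
        _ = ‖a p.2‖ * ‖a q.2‖ * V := by rw [integral_const_mul, VL]
    · rw [if_neg hc]
      have hne : p.1 - (p.2 : ℤ) ≠ q.1 - (q.2 : ℤ) := by omega
      have hind : IndepFun (g p) (g q) ℙ :=
        (hε.indep.indepFun hne).comp (a p.2).continuous.measurable (a q.2).continuous.measurable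
      have h0p : ∫ ω, g p ω ∂ℙ = 0 := by
        rw [hg]
        have := (a p.2).integral_comp_comm ((memL (p.1 - (p.2:ℤ))).integrable one_le_two)
        simp only at this ⊢
        rw [this, meanL, map_zero]
      have := aux_indep_integral_inner hind
        ((a p.2).continuous.measurable.comp (hε.meas _)).aemeasurable
        ((a q.2).continuous.measurable.comp (hε.meas _)).aemeasurable
        ((memG p).integrable one_le_two) ((memG q).integrable one_le_two)
      rw [this, h0p, inner_zero_left]
  have step3 : ∑ p ∈ t, ∑ q ∈ t,
      (if q.1 = p.1 - (p.2 : ℤ) + q.2 then ‖a p.2‖ * ‖a q.2‖ * V else 0)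
      ≤ s.card * A ^ 2 * V := by
    have hAj : ∀ r : Finset ℕ, ∑ j ∈ r, ‖a j‖ ≤ A := fun r => ha.sum_le_tsum r
      (fun j _ => norm_nonneg _)
    have inner_bd : ∀ p : ℤ × ℕ, ∑ q ∈ t,
        (if q.1 = p.1 - (p.2 : ℤ) + q.2 then ‖a p.2‖ * ‖a q.2‖ * V else 0)
        ≤ ‖a p.2‖ * A * V := by
      intro p
      rw [ht, Finset.sum_product_right]
      have hq : ∀ j' ∈ Finset.range (m+1),
          (∑ l' ∈ s, if l' = p.1 - (p.2 : ℤ) + (j' : ℤ) then ‖a p.2‖ * ‖a j'‖ * V else 0)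
          ≤ ‖a p.2‖ * ‖a j'‖ * V := by
        intro j' _
        rw [Finset.sum_ite_eq' s (p.1 - (p.2 : ℤ) + (j' : ℤ)) (fun _ => ‖a p.2‖ * ‖a j'‖ * V)]
        split
        · exact le_rfl
        · positivity
      calc (∑ j' ∈ Finset.range (m+1), ∑ l' ∈ s,
            if (l', j').1 = p.1 - (p.2 : ℤ) + ((l', j').2 : ℤ) then ‖a p.2‖ * ‖a (l', j').2‖ * V else 0)
          ≤ ∑ j' ∈ Finset.range (m+1), ‖a p.2‖ * ‖a j'‖ * V := Finset.sum_le_sum hq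
        _ = ‖a p.2‖ * (∑ j' ∈ Finset.range (m+1), ‖a j'‖) * V := by
            rw [← Finset.sum_mul, ← Finset.mul_sum]
        _ ≤ ‖a p.2‖ * A * V := by
            exact mul_le_mul_of_nonneg_right
              (mul_le_mul_of_nonneg_left (hAj _) (norm_nonneg _)) hV0
    calc ∑ p ∈ t, ∑ q ∈ t, (if q.1 = p.1 - (p.2 : ℤ) + q.2 then ‖a p.2‖ * ‖a q.2‖ * V else 0)
        ≤ ∑ p ∈ t, ‖a p.2‖ * A * V := Finset.sum_le_sum fun p _ => inner_bd p
      _ = ∑ l ∈ s, ∑ j ∈ Finset.range (m+1), ‖a j‖ * A * V := by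
          rw [ht, Finset.sum_product]
      _ ≤ ∑ l ∈ s, A * A * V := by
          refine Finset.sum_le_sum fun l _ => ?_
          rw [← Finset.sum_mul, ← Finset.sum_mul]
          have hA0 : 0 ≤ A := tsum_nonneg fun j => norm_nonneg _
          exact mul_le_mul_of_nonneg_right
            (mul_le_mul_of_nonneg_right (hAj _) hA0) hV0
      _ = s.card * A ^ 2 * V := by rw [Finset.sum_const]; push_cast; ring
  calc ∫ ω, ‖∑ p ∈ t, g p ω‖ ^ 2 ∂ℙ
      = ∑ p ∈ t, ∑ q ∈ t, ∫ ω, ⟪g p ω, g q ω⟫_ℝ ∂ℙ := step1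
    _ ≤ ∑ p ∈ t, ∑ q ∈ t, (if q.1 = p.1 - (p.2 : ℤ) + q.2 then ‖a p.2‖ * ‖a q.2‖ * V else 0) :=
        Finset.sum_le_sum fun p _ => Finset.sum_le_sum fun q _ => step2 p q
    _ ≤ s.card * A ^ 2 * V := step3

lemma aux_eLpNorm_partial (ε : ℤ → Ω → H) (hε : IsStrongWhiteNoise ε)
    (a : ℕ → H →L[ℝ] H) (ha : Summable fun j : ℕ => ‖a j‖) (s : Finset ℤ) (m : ℕ) :
    eLpNorm (fun ω => ∑ p ∈ s ×ˢ Finset.range (m + 1), a p.2 (ε (p.1 - (p.2 : ℤ)) ω)) 2 ℙ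
      ≤ (ENNReal.ofReal (s.card * (∑' j, ‖a j‖) ^ 2 * ∫ ω, ‖ε 0 ω‖ ^ 2 ∂ℙ)) ^ ((1:ℝ)/2) := by
  have idd : ∀ l : ℤ, IdentDistrib (ε l) (ε 0) ℙ ℙ :=
    fun l => ⟨(hε.meas l).aemeasurable, (hε.meas 0).aemeasurable, hε.ident l⟩
  have memL : ∀ l : ℤ, MemLp (ε l) 2 ℙ := fun l => (idd l).symm.memLp_snd hε.sqInt
  set f : Ω → H := fun ω => ∑ p ∈ s ×ˢ Finset.range (m + 1), a p.2 (ε (p.1 - (p.2 : ℤ)) ω)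
    with hf
  have memF : MemLp f 2 ℙ :=
    memLp_finset_sum _ fun (p : ℤ × ℕ) _ => ContinuousLinearMap.comp_memLp' (a p.2) (memL _)
  have intSqF : Integrable (fun ω => ‖f ω‖ ^ 2) ℙ := by
    have h := memF.integrable_norm_rpow two_ne_zero ENNReal.ofNat_ne_top
    refine h.congr (Eventually.of_forall fun ω => ?_)
    have h2 : ((2:ℝ≥0∞).toReal) = ((2:ℕ):ℝ) := by simp
    simp only [h2, Real.rpow_natCast]
  have h1 : ∫⁻ ω, (‖f ω‖₊ : ℝ≥0∞) ^ (2:ℝ) ∂ℙ = ENNReal.ofReal (∫ ω, ‖f ω‖ ^ 2 ∂ℙ) := by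
    rw [MeasureTheory.ofReal_integral_eq_lintegral_ofReal intSqF
      (Eventually.of_forall fun ω => by positivity)]
    refine lintegral_congr fun ω => ?_
    rw [ENNReal.ofReal_pow (norm_nonneg _), aux_ofReal_norm_eq_coe_nnnorm,
      ← ENNReal.rpow_natCast]
    norm_num
  rw [eLpNorm_eq_lintegral_rpow_enorm_toReal two_ne_zero ENNReal.ofNat_ne_top]
  have htr : ((2:ℝ≥0∞).toReal) = (2:ℝ) := by simp
  rw [htr]
  refine ENNReal.rpow_le_rpow ?_ (by norm_num)
  refine (le_of_eq h1).trans ?_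
  exact ENNReal.ofReal_le_ofReal (aux_sq_bound ε hε a ha s m)

lemma aux_eLpNorm_sum_X (ε : ℤ → Ω → H) (hε : IsStrongWhiteNoise ε)
    (a : ℕ → H →L[ℝ] H) (ha : Summable fun j : ℕ => ‖a j‖)
    (X : ℤ → Ω → H)
    (hX : ∀ k : ℤ, ∀ᵐ ω ∂ℙ,
      Tendsto (fun m : ℕ => ∑ j ∈ Finset.range (m + 1), a j (ε (k - j) ω))
        atTop (𝓝 (X k ω)))
    (s : Finset ℤ) :
    eLpNorm (fun ω => ∑ l ∈ s, X l ω) 2 ℙ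
      ≤ (ENNReal.ofReal (s.card * (∑' j, ‖a j‖) ^ 2 * ∫ ω, ‖ε 0 ω‖ ^ 2 ∂ℙ)) ^ ((1:ℝ)/2) := by
  have hlim : ∀ᵐ ω ∂ℙ, Tendsto
      (fun m : ℕ => ∑ p ∈ s ×ˢ Finset.range (m + 1), a p.2 (ε (p.1 - (p.2 : ℤ)) ω))
      atTop (𝓝 (∑ l ∈ s, X l ω)) := by
    have hae := (ae_ball_iff s.countable_toSet).mpr (fun l (_ : l ∈ (s : Set ℤ)) => hX l)
    filter_upwards [hae] with ω hω
    have h := tendsto_finset_sum s (fun l hl => hω l hl)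
    refine h.congr fun m => ?_
    rw [Finset.sum_product]
  have haesm : ∀ m : ℕ, AEStronglyMeasurable
      (fun ω => ∑ p ∈ s ×ˢ Finset.range (m + 1), a p.2 (ε (p.1 - (p.2 : ℤ)) ω)) ℙ := by
    intro m
    exact (Finset.measurable_sum _ fun p _ =>
      (a p.2).continuous.measurable.comp (hε.meas _)).aestronglyMeasurable
  refine le_trans (Lp.eLpNorm_lim_le_liminf_eLpNorm haesm _ hlim) ?_
  calc Filter.liminf (fun m : ℕ => eLpNorm
        (fun ω => ∑ p ∈ s ×ˢ Finset.range (m + 1), a p.2 (ε (p.1 - (p.2 : ℤ)) ω)) 2 ℙ) atTop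
      ≤ Filter.liminf (fun _ : ℕ =>
          (ENNReal.ofReal (s.card * (∑' j, ‖a j‖) ^ 2 * ∫ ω, ‖ε 0 ω‖ ^ 2 ∂ℙ)) ^ ((1:ℝ)/2))
          atTop :=
        Filter.liminf_le_liminf (Eventually.of_forall fun m => aux_eLpNorm_partial ε hε a ha s m)
    _ = _ := Filter.liminf_const _

lemma aux_cheb {E : Type*} [NormedAddCommGroup E] {f : Ω → E}
    (hf : AEStronglyMeasurable f ℙ) {C t : ℝ} (hC : 0 ≤ C) (ht : 0 < t)
    (hb : eLpNorm f 2 ℙ ≤ (ENNReal.ofReal C) ^ ((1:ℝ)/2)) :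
    ℙ {ω | ENNReal.ofReal t ≤ (‖f ω‖₊ : ℝ≥0∞)} ≤ ENNReal.ofReal (C / t ^ 2) := by
  have ht0 : (ENNReal.ofReal t) ≠ 0 := (ENNReal.ofReal_pos.mpr ht).ne'
  have h := meas_ge_le_mul_pow_eLpNorm_enorm (μ := ℙ) two_ne_zero ENNReal.ofNat_ne_top hf ht0
    (fun h => absurd h ENNReal.ofReal_ne_top)
  have htr : ((2:ℝ≥0∞).toReal) = (2:ℝ) := by simp
  rw [htr] at h
  refine h.trans ?_
  have h1 : eLpNorm f 2 ℙ ^ (2:ℝ) ≤ ENNReal.ofReal C := by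
    calc eLpNorm f 2 ℙ ^ (2:ℝ) ≤ ((ENNReal.ofReal C) ^ ((1:ℝ)/2)) ^ (2:ℝ) :=
          ENNReal.rpow_le_rpow hb (by norm_num)
      _ = ENNReal.ofReal C := by
          rw [← ENNReal.rpow_mul]; norm_num
  calc (ENNReal.ofReal t)⁻¹ ^ (2:ℝ) * eLpNorm f 2 ℙ ^ (2:ℝ)
      ≤ (ENNReal.ofReal t)⁻¹ ^ (2:ℝ) * ENNReal.ofReal C := by gcongr
    _ = ENNReal.ofReal (C / t ^ 2) := by
        rw [← ENNReal.ofReal_inv_of_pos ht,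
          ENNReal.ofReal_rpow_of_pos (by positivity),
          ← ENNReal.ofReal_mul (by positivity)]
        congr 1
        rw [show ((2:ℝ)) = ((2:ℕ):ℝ) by norm_num, Real.rpow_natCast, inv_pow,
          div_eq_mul_inv, mul_comm]


set_option maxHeartbeats 2000000

/-- almost sure rate for the empirical mean of a linear process:
for every `δ > 0`, `(n^{1/4}/(log n)^{1/2+δ}) ‖S_n/n‖ → 0` a.s. -/
theorem linear_process_mean_as_rate
    (ε : ℤ → Ω → H) (hε : IsStrongWhiteNoise ε)
    (a : ℕ → H →L[ℝ] H) (ha : Summable fun j : ℕ => ‖a j‖)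
    (X : ℤ → Ω → H) (hXmeas : ∀ k, Measurable (X k))
    (hX : ∀ k : ℤ, ∀ᵐ ω ∂ℙ,
      Tendsto (fun m : ℕ => ∑ j ∈ Finset.range (m + 1), a j (ε (k - j) ω))
        atTop (𝓝 (X k ω)))
    (δ : ℝ) (hδ : 0 < δ) :
    ∀ᵐ ω ∂ℙ, Tendsto
      (fun n : ℕ =>
        ((n : ℝ) ^ ((1 : ℝ) / 4) / Real.log n ^ ((1 : ℝ) / 2 + δ)) *
          ‖(n : ℝ)⁻¹ • ∑ k ∈ Finset.range n, X (k + 1) ω‖)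
      atTop (𝓝 0) := by
    classical
  set A : ℝ := ∑' j, ‖a j‖ with hA
  set V : ℝ := ∫ ω, ‖ε 0 ω‖ ^ 2 ∂ℙ with hV
  have hA0 : 0 ≤ A := tsum_nonneg fun j => norm_nonneg _
  have hV0 : 0 ≤ V := integral_nonneg fun ω => by positivity
  set S : ℕ → Ω → H := fun n ω => ∑ k ∈ Finset.range n, X (k + 1) ω with hS
  have hSmeas : ∀ n, Measurable (S n) := fun n =>
    Finset.measurable_sum _ fun k _ => hXmeas _
  -- moment bound for S n
  have hofr : ∀ (c x : ℝ), 0 ≤ c → 0 ≤ x →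
      (ENNReal.ofReal c) * (ENNReal.ofReal x) ^ ((1:ℝ)/2)
        = (ENNReal.ofReal (c ^ 2 * x)) ^ ((1:ℝ)/2) := by
    intro c x hc hx
    rw [ENNReal.ofReal_mul (by positivity), ENNReal.mul_rpow_of_nonneg _ _ (by norm_num)]
    congr 1
    rw [ENNReal.ofReal_pow hc, ← ENNReal.rpow_natCast (ENNReal.ofReal c) 2,
      ← ENNReal.rpow_mul]
    norm_num
  have hSbound : ∀ n : ℕ, eLpNorm (S n) 2 ℙ
      ≤ (ENNReal.ofReal ((n : ℝ) * A ^ 2 * V)) ^ ((1:ℝ)/2) := by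
    intro n
    have hinj : Function.Injective (fun k : ℕ => (k : ℤ) + 1) := by
      intro x y h; simpa using h
    set s : Finset ℤ := (Finset.range n).image (fun k : ℕ => (k : ℤ) + 1) with hs
    have hcard : s.card = n := by
      rw [hs, Finset.card_image_of_injective _ hinj, Finset.card_range]
    have h := aux_eLpNorm_sum_X ε hε a ha X hX s
    rw [hcard] at h
    have hfun : (fun ω => ∑ l ∈ s, X l ω) = S n := by
      funext ω
      rw [hs, Finset.sum_image (fun x _ y _ h => hinj h)]
    rwa [hfun] at h
  -- moment bound for X k
  have hXbound : ∀ k : ℤ, eLpNorm (X k) 2 ℙ ≤ (ENNReal.ofReal (A ^ 2 * V)) ^ ((1:ℝ)/2) := by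
    intro k
    have h := aux_eLpNorm_sum_X ε hε a ha X hX {k}
    have hfun : (fun ω => ∑ l ∈ ({k} : Finset ℤ), X l ω) = X k := by
      funext ω; exact Finset.sum_singleton _ _
    rw [hfun] at h
    simpa using h
  -- block fluctuation sums
  set T : ℕ → Ω → ℝ := fun k ω =>
    ∑ j ∈ (Finset.Ico ((k+2)^2) ((k+3)^2) : Finset ℕ), ‖X ((j:ℤ) + 1) ω‖ with hT
  have hTmeas : ∀ k, Measurable (T k) := fun k =>
    Finset.measurable_sum _ fun j _ => (hXmeas _).norm
  have hTbound : ∀ k : ℕ, eLpNorm (T k) 2 ℙ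
      ≤ (ENNReal.ofReal (((2*k+5 : ℕ) : ℝ) ^ 2 * (A ^ 2 * V))) ^ ((1:ℝ)/2) := by
    intro k
    have hfun : T k = ∑ j ∈ (Finset.Ico ((k+2)^2) ((k+3)^2) : Finset ℕ), (fun ω => ‖X ((j:ℤ) + 1) ω‖) := by
      funext ω; rw [hT]; simp [Finset.sum_apply]
    have h1 : eLpNorm (T k) 2 ℙ
        ≤ ∑ j ∈ (Finset.Ico ((k+2)^2) ((k+3)^2) : Finset ℕ), eLpNorm (fun ω => ‖X ((j:ℤ)+1) ω‖) 2 ℙ := by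
      rw [hfun]
      exact eLpNorm_sum_le (fun j _ => ((hXmeas _).norm).aestronglyMeasurable) one_le_two
    have h2 : ∀ j : ℕ, eLpNorm (fun ω => ‖X ((j:ℤ)+1) ω‖) 2 ℙ
        ≤ (ENNReal.ofReal (A ^ 2 * V)) ^ ((1:ℝ)/2) := by
      intro j; rw [eLpNorm_norm]; exact hXbound _
    have hcard : ((Finset.Ico ((k+2)^2) ((k+3)^2) : Finset ℕ)).card = 2*k+5 := by
      rw [Nat.card_Ico]; ring_nf; omega
    calc eLpNorm (T k) 2 ℙ
        ≤ ∑ j ∈ (Finset.Ico ((k+2)^2) ((k+3)^2) : Finset ℕ), eLpNorm (fun ω => ‖X ((j:ℤ)+1) ω‖) 2 ℙ := h1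
      _ ≤ ((Finset.Ico ((k+2)^2) ((k+3)^2) : Finset ℕ)).card • ((ENNReal.ofReal (A ^ 2 * V)) ^ ((1:ℝ)/2)) :=
          Finset.sum_le_card_nsmul _ _ _ (fun j _ => h2 j)
      _ = ((2*k+5 : ℕ) : ℝ≥0∞) * (ENNReal.ofReal (A ^ 2 * V)) ^ ((1:ℝ)/2) := by
          rw [hcard, nsmul_eq_mul]
      _ = (ENNReal.ofReal (((2*k+5 : ℕ) : ℝ) ^ 2 * (A ^ 2 * V))) ^ ((1:ℝ)/2) := by
          rw [← ENNReal.ofReal_natCast (2*k+5)]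
          exact hofr _ _ (by positivity) (by positivity)
  -- Borel–Cantelli for each threshold level q
  have main : ∀ q : ℕ, ∀ᵐ ω ∂ℙ, ∀ᶠ k in atTop,
      ‖S ((k+2)^2) ω‖ < (((q:ℝ)+1)⁻¹/2) * ((k:ℝ)+2) ^ ((3:ℝ)/2)
          * Real.log ((k:ℝ)+2) ^ ((1:ℝ)/2+δ)
      ∧ T k ω < (((q:ℝ)+1)⁻¹/2) * ((k:ℝ)+2) ^ ((3:ℝ)/2)
          * Real.log ((k:ℝ)+2) ^ ((1:ℝ)/2+δ) := by
    intro q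
    set e : ℝ := ((q:ℝ)+1)⁻¹/2 with he
    have he0 : 0 < e := by positivity
    set tk : ℕ → ℝ := fun k => e * ((k:ℝ)+2) ^ ((3:ℝ)/2) * Real.log ((k:ℝ)+2) ^ ((1:ℝ)/2+δ)
      with htk
    have hlogpos : ∀ k : ℕ, 0 < Real.log ((k:ℝ)+2) := fun k =>
      Real.log_pos (by have := Nat.cast_nonneg (α := ℝ) k; linarith)
    have htkpos : ∀ k, 0 < tk k := by
      intro k
      have h1 := hlogpos k
      have h2 : (0:ℝ) < (k:ℝ)+2 := by positivity
      rw [htk]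
      have h3 : (0:ℝ) < ((k:ℝ)+2) ^ ((3:ℝ)/2) := Real.rpow_pos_of_pos h2 _
      have h4 : (0:ℝ) < Real.log ((k:ℝ)+2) ^ ((1:ℝ)/2+δ) := Real.rpow_pos_of_pos h1 _
      positivity
    have htksq : ∀ k : ℕ, tk k ^ 2
        = e^2 * ((k:ℝ)+2) ^ (3:ℝ) * Real.log ((k:ℝ)+2) ^ (1+2*δ) := by
      intro k
      have h2 : (0:ℝ) ≤ (k:ℝ)+2 := by positivity
      have hL : (0:ℝ) ≤ Real.log ((k:ℝ)+2) := (hlogpos k).le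
      have hx : (((k:ℝ)+2) ^ ((3:ℝ)/2))^2 = ((k:ℝ)+2) ^ (3:ℝ) := by
        rw [← Real.rpow_natCast (((k:ℝ)+2) ^ ((3:ℝ)/2)) 2, ← Real.rpow_mul h2]
        congr 1
        push_cast
        ring
      have hy : (Real.log ((k:ℝ)+2) ^ ((1:ℝ)/2+δ))^2 = Real.log ((k:ℝ)+2) ^ (1+2*δ) := by
        rw [← Real.rpow_natCast (Real.log ((k:ℝ)+2) ^ ((1:ℝ)/2+δ)) 2, ← Real.rpow_mul hL]
        congr 1
        push_cast
        ring
      rw [htk]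
      simp only
      rw [mul_pow, mul_pow, hx, hy]
    set D : ℕ → Set Ω := fun k =>
      {ω | ENNReal.ofReal (tk k) ≤ (‖S ((k+2)^2) ω‖₊ : ℝ≥0∞)}
        ∪ {ω | ENNReal.ofReal (tk k) ≤ (‖T k ω‖₊ : ℝ≥0∞)} with hD
    have hP : ∀ k, ℙ (D k) ≤ ENNReal.ofReal ((10 * (A^2*V) / e^2) *
        (((k:ℝ)+2) * Real.log ((k:ℝ)+2) ^ (1+2*δ))⁻¹) := by
      intro k
      have hP1 : ℙ {ω | ENNReal.ofReal (tk k) ≤ (‖S ((k+2)^2) ω‖₊ : ℝ≥0∞)}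
          ≤ ENNReal.ofReal (((((k+2)^2 : ℕ)):ℝ) * A^2*V / tk k ^ 2) :=
        aux_cheb (hSmeas _).aestronglyMeasurable (by positivity) (htkpos k)
          (hSbound ((k+2)^2))
      have hP2 : ℙ {ω | ENNReal.ofReal (tk k) ≤ (‖T k ω‖₊ : ℝ≥0∞)}
          ≤ ENNReal.ofReal ((((2*k+5:ℕ)):ℝ)^2 * (A^2*V) / tk k ^ 2) :=
        aux_cheb (hTmeas _).aestronglyMeasurable (by positivity) (htkpos k) (hTbound k)
      refine ((measure_union_le _ _).trans (add_le_add hP1 hP2)).trans ?_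
      rw [← ENNReal.ofReal_add (by positivity) (by positivity)]
      apply ENNReal.ofReal_le_ofReal
      have hK2 : (2:ℝ) ≤ (k:ℝ)+2 := by have := Nat.cast_nonneg (α := ℝ) k; linarith
      have hKpos : (0:ℝ) < (k:ℝ)+2 := by linarith
      have hL := hlogpos k
      have hcast1 : ((((k+2)^2 : ℕ)):ℝ) = ((k:ℝ)+2)^2 := by push_cast; ring
      have hcast2 : (((2*k+5:ℕ)):ℝ) = 2*(k:ℝ)+5 := by push_cast; ring
      have hK3 : ((k:ℝ)+2) ^ ((3:ℝ)) = ((k:ℝ)+2)^(3:ℕ) := by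
        rw [show (3:ℝ) = ((3:ℕ):ℝ) by norm_num, Real.rpow_natCast]
      have htkpos2 : (0:ℝ) < tk k ^ 2 := by positivity
      have hnum : ((((k+2)^2 : ℕ)):ℝ) * A^2*V + (((2*k+5:ℕ)):ℝ)^2 * (A^2*V)
          ≤ 10 * ((k:ℝ)+2)^2 * (A^2*V) := by
        rw [hcast1, hcast2]
        have h9 : (2*(k:ℝ)+5)^2 ≤ 9*((k:ℝ)+2)^2 := by nlinarith [Nat.cast_nonneg (α := ℝ) k]
        nlinarith [sq_nonneg A, hV0, mul_nonneg (sq_nonneg A) hV0,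
          mul_le_mul_of_nonneg_right h9 (mul_nonneg (sq_nonneg A) hV0)]
      calc ((((k+2)^2 : ℕ)):ℝ) * A^2*V / tk k ^ 2 + (((2*k+5:ℕ)):ℝ)^2 * (A^2*V) / tk k ^ 2
          = (((((k+2)^2 : ℕ)):ℝ) * A^2*V + (((2*k+5:ℕ)):ℝ)^2 * (A^2*V)) / tk k ^ 2 :=
            (add_div _ _ _).symm
        _ ≤ (10 * ((k:ℝ)+2)^2 * (A^2*V)) / tk k ^ 2 := by
            rw [div_eq_mul_inv, div_eq_mul_inv]
            exact mul_le_mul_of_nonneg_right hnum (by positivity)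
        _ = (10 * (A^2*V) / e^2) * (((k:ℝ)+2) * Real.log ((k:ℝ)+2) ^ (1+2*δ))⁻¹ := by
            rw [htksq k, hK3]
            have hLp : (0:ℝ) < Real.log ((k:ℝ)+2) ^ (1+2*δ) := Real.rpow_pos_of_pos hL _
            field_simp
    have hsum : ∑' k, ℙ (D k) ≠ ⊤ := by
      have hbert : Summable (fun k : ℕ =>
          (((k:ℝ)+2) * Real.log ((k:ℝ)+2) ^ (1+2*δ))⁻¹) :=
        aux_bertrand (by linarith : (1:ℝ) < 1+2*δ)
      have hs := hbert.mul_left (10 * (A^2*V) / e^2)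
      have h1 : ∑' k, ℙ (D k) ≤ ∑' (k : ℕ), ENNReal.ofReal ((10 * (A^2*V) / e^2) *
          (((k:ℝ)+2) * Real.log ((k:ℝ)+2) ^ (1+2*δ))⁻¹) := ENNReal.tsum_le_tsum hP
      have h2 : (∑' k : ℕ, ENNReal.ofReal ((10 * (A^2*V) / e^2) *
          (((k:ℝ)+2) * Real.log ((k:ℝ)+2) ^ (1+2*δ))⁻¹)) = ENNReal.ofReal
          (∑' k : ℕ, (10 * (A^2*V) / e^2) *
            (((k:ℝ)+2) * Real.log ((k:ℝ)+2) ^ (1+2*δ))⁻¹) := by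
        refine (ENNReal.ofReal_tsum_of_nonneg (fun k => ?_) hs).symm
        have h1 := hlogpos k
        have h2 : (0:ℝ) < (k:ℝ)+2 := by positivity
        have h3 : (0:ℝ) < Real.log ((k:ℝ)+2) ^ (1+2*δ) := Real.rpow_pos_of_pos h1 _
        positivity
      exact ((h1.trans_eq h2).trans_lt ENNReal.ofReal_lt_top).ne
    filter_upwards [MeasureTheory.ae_eventually_notMem hsum] with ω hω
    refine hω.mono fun k hk => ?_
    rw [hD] at hk
    simp only [Set.mem_union, Set.mem_setOf_eq, not_or] at hk
    obtain ⟨h1, h2⟩ := hk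
    constructor
    · by_contra hcon
      push_neg at hcon
      exact h1 (by rw [← aux_ofReal_norm_eq_coe_nnnorm]; exact ENNReal.ofReal_le_ofReal hcon)
    · have hTlt : ‖T k ω‖ < tk k := by
        by_contra hcon
        push_neg at hcon
        exact h2 (by rw [← aux_ofReal_norm_eq_coe_nnnorm]; exact ENNReal.ofReal_le_ofReal hcon)
      calc T k ω ≤ |T k ω| := le_abs_self _
        _ < tk k := by rwa [Real.norm_eq_abs] at hTlt
  -- combine over q and conclude pathwise
  have mainAll := ae_all_iff.mpr main
  filter_upwards [mainAll] with ω hω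
  rw [Metric.tendsto_atTop]
  intro εr hεr
  obtain ⟨q, hq⟩ := exists_nat_one_div_lt hεr
  obtain ⟨k₀, hk₀⟩ := eventually_atTop.mp (hω q)
  refine ⟨(k₀+2)^2, fun n hn => ?_⟩
  have hrk : k₀ + 2 ≤ Nat.sqrt n := by
    have h := Nat.sqrt_le_sqrt hn
    rwa [Nat.sqrt_eq' (k₀+2)] at h
  set r := Nat.sqrt n with hr
  set k := r - 2 with hkdef
  have hk2 : k + 2 = r := by omega
  obtain ⟨hS1, hT1⟩ := hk₀ k (by omega)
  have hr2 : 2 ≤ r := by omega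
  have hrsq : r^2 ≤ n := Nat.sqrt_le' n
  have hnlt : n < (r+1)^2 := Nat.lt_succ_sqrt' n
  have hn4 : 4 ≤ n := le_trans (by nlinarith) hn
  -- split the partial sum over the block
  have hsumle : ∑ j ∈ Finset.Ico (r^2) n, ‖X ((j:ℤ)+1) ω‖ ≤ T k ω := by
    simp only [hT]
    have h1 : (k+2)^2 = r^2 := by rw [hk2]
    have h2 : (k+3)^2 = (r+1)^2 := by
      have : k+3 = r+1 := by omega
      rw [this]
    rw [h1, h2]
    exact Finset.sum_le_sum_of_subset_of_nonneg
      (Finset.Ico_subset_Ico le_rfl hnlt.le) (fun j _ _ => norm_nonneg _)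
  have hsplit : ‖S n ω‖ ≤ ‖S (r^2) ω‖ + T k ω := by
    have hEq : S n ω = S (r^2) ω + ∑ j ∈ Finset.Ico (r^2) n, X ((j:ℤ)+1) ω := by
      simp only [hS]
      exact (Finset.sum_range_add_sum_Ico (fun i : ℕ => X ((i:ℤ)+1) ω) hrsq).symm
    rw [hEq]
    exact (norm_add_le _ _).trans
      (add_le_add_right ((norm_sum_le _ _).trans hsumle) _)
  -- numeric estimates
  set N : ℝ := (n:ℝ) with hN
  have hN4 : (4:ℝ) ≤ N := by rw [hN]; exact_mod_cast hn4
  have hN0 : (0:ℝ) < N := by linarith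
  have hlogN : 0 < Real.log N := Real.log_pos (by linarith)
  have hLp : 0 < Real.log N ^ ((1:ℝ)/2+δ) := Real.rpow_pos_of_pos hlogN _
  have hkr : ((k:ℝ)+2) = (r:ℝ) := by exact_mod_cast hk2
  have hr0 : (0:ℝ) < (r:ℝ) := by exact_mod_cast Nat.lt_of_lt_of_le Nat.zero_lt_two hr2
  have hrN : ((r:ℝ))^2 ≤ N := by rw [hN]; exact_mod_cast hrsq
  have hrle : (r:ℝ) ≤ N ^ ((1:ℝ)/2) := by
    rw [← Real.sqrt_eq_rpow]
    exact (Real.le_sqrt hr0.le (by linarith)).mpr hrN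
  have hr32 : (r:ℝ) ^ ((3:ℝ)/2) ≤ N ^ ((3:ℝ)/4) := by
    calc (r:ℝ)^((3:ℝ)/2) ≤ (N ^ ((1:ℝ)/2)) ^ ((3:ℝ)/2) :=
          Real.rpow_le_rpow hr0.le hrle (by norm_num)
      _ = N ^ ((3:ℝ)/4) := by rw [← Real.rpow_mul hN0.le]; norm_num
  have hrleN : (r:ℝ) ≤ N := by
    rw [hN]
    exact_mod_cast le_trans (Nat.le_self_pow two_ne_zero r) hrsq
  have hlogr0 : 0 ≤ Real.log (r:ℝ) := Real.log_nonneg (by exact_mod_cast hr2.trans' one_le_two)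
  have hLr : Real.log (r:ℝ) ^ ((1:ℝ)/2+δ) ≤ Real.log N ^ ((1:ℝ)/2+δ) :=
    Real.rpow_le_rpow hlogr0 (Real.log_le_log hr0 hrleN) (by linarith)
  have hSn : ‖S n ω‖ < ((q:ℝ)+1)⁻¹ * N ^ ((3:ℝ)/4) * Real.log N ^ ((1:ℝ)/2+δ) := by
    have h1 : (k+2)^2 = r^2 := by rw [hk2]
    rw [h1] at hS1
    rw [hkr] at hS1 hT1
    have hchain : ‖S n ω‖ < ((q:ℝ)+1)⁻¹ * ((r:ℝ)^((3:ℝ)/2) * Real.log (r:ℝ)^((1:ℝ)/2+δ)) := by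
      calc ‖S n ω‖ ≤ ‖S (r^2) ω‖ + T k ω := hsplit
        _ < (((q:ℝ)+1)⁻¹/2) * (r:ℝ)^((3:ℝ)/2) * Real.log (r:ℝ)^((1:ℝ)/2+δ)
            + (((q:ℝ)+1)⁻¹/2) * (r:ℝ)^((3:ℝ)/2) * Real.log (r:ℝ)^((1:ℝ)/2+δ) :=
            add_lt_add hS1 hT1
        _ = ((q:ℝ)+1)⁻¹ * ((r:ℝ)^((3:ℝ)/2) * Real.log (r:ℝ)^((1:ℝ)/2+δ)) := by ring
    calc ‖S n ω‖ < ((q:ℝ)+1)⁻¹ * ((r:ℝ)^((3:ℝ)/2) * Real.log (r:ℝ)^((1:ℝ)/2+δ)) := hchain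
      _ ≤ ((q:ℝ)+1)⁻¹ * (N^((3:ℝ)/4) * Real.log N^((1:ℝ)/2+δ)) := by
          refine mul_le_mul_of_nonneg_left ?_ (by positivity)
          exact mul_le_mul hr32 hLr (by positivity) (by positivity)
      _ = ((q:ℝ)+1)⁻¹ * N^((3:ℝ)/4) * Real.log N^((1:ℝ)/2+δ) := by ring
  -- final computation
  have hFval : N ^ ((1:ℝ)/4) / Real.log N ^ ((1:ℝ)/2+δ) * ‖N⁻¹ • S n ω‖ < ((q:ℝ)+1)⁻¹ := by
    rw [norm_smul, norm_inv, Real.norm_eq_abs, abs_of_pos hN0]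
    have hpos : 0 < N ^ ((1:ℝ)/4) / Real.log N ^ ((1:ℝ)/2+δ) * N⁻¹ := by positivity
    have e1 : N^((1:ℝ)/4) * N^((3:ℝ)/4) = N := by
      rw [← Real.rpow_add hN0]; norm_num
    calc N ^ ((1:ℝ)/4) / Real.log N ^ ((1:ℝ)/2+δ) * (N⁻¹ * ‖S n ω‖)
        = (N ^ ((1:ℝ)/4) / Real.log N ^ ((1:ℝ)/2+δ) * N⁻¹) * ‖S n ω‖ := by ring
      _ < (N ^ ((1:ℝ)/4) / Real.log N ^ ((1:ℝ)/2+δ) * N⁻¹) *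
            (((q:ℝ)+1)⁻¹ * N ^ ((3:ℝ)/4) * Real.log N ^ ((1:ℝ)/2+δ)) :=
          mul_lt_mul_of_pos_left hSn hpos
      _ = ((q:ℝ)+1)⁻¹ * ((N^((1:ℝ)/4) * N^((3:ℝ)/4)) * N⁻¹)
            * (Real.log N ^ ((1:ℝ)/2+δ) / Real.log N ^ ((1:ℝ)/2+δ)) := by ring
      _ = ((q:ℝ)+1)⁻¹ := by
          rw [e1, mul_inv_cancel₀ (ne_of_gt hN0), div_self (ne_of_gt hLp)]
          ring
  have hnn : 0 ≤ N ^ ((1:ℝ)/4) / Real.log N ^ ((1:ℝ)/2+δ) * ‖N⁻¹ • S n ω‖ := by positivity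
  rw [dist_zero_right, Real.norm_eq_abs, abs_of_nonneg hnn]
  refine lt_trans hFval ?_
  rw [← one_div]
  exact hq
end
end

section
/- Let Γ be a compact, self-adjoint, positive, injective bounded operator on H with orthonormal basis (e_l)_{l∈ℕ} of eigenvectors, Γ e_l = λ_l e_l, λ_l > 0, and let (α_n) be a sequence of positive real numbers decreasing to 0. Then for every x in the range of Γ, the penalized regularized inverse satisfies: for each n the series Σ_{l=0}^∞ (λ_l + α_n)^{-1} ⟨x, e_l⟩ e_l converges in H, and its sum tends to Γ^{-1}x as n → ∞. -/
open Filter Topology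
open scoped ENNReal NNReal
open scoped InnerProductSpace

/-- convergence of the penalized regularized inverse: for `x` in the range of
`Γ` with `Γ y = x` and `α_n ↓ 0`, each series `Σ_l (λ_l + α_n)⁻¹ ⟪x, e_l⟫ e_l` converges
in `H` and its sum tends to `y = Γ⁻¹ x`. -/
theorem penalized_regularized_inverse_converges
    {H : Type*} [NormedAddCommGroup H] [InnerProductSpace ℝ H] [CompleteSpace H]
    (Γ : H →L[ℝ] H) (hcomp : IsCompactOperator Γ)
    (hsa : ∀ x y : H, ⟪Γ x, y⟫_ℝ = ⟪x, Γ y⟫_ℝ)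
    (hpos : ∀ x : H, 0 ≤ ⟪Γ x, x⟫_ℝ)
    (hinj : Function.Injective Γ)
    (e : HilbertBasis ℕ ℝ H) (lam : ℕ → ℝ)
    (heig : ∀ l, Γ (e l) = lam l • e l) (hlam : ∀ l, 0 < lam l)
    (α : ℕ → ℝ) (hα : ∀ n, 0 < α n) (hαmono : Antitone α)
    (hα0 : Tendsto α atTop (𝓝 0))
    (x y : H) (hy : Γ y = x) :
    (∀ n : ℕ, Summable fun l : ℕ => ((lam l + α n)⁻¹ * ⟪x, e l⟫_ℝ) • (e l : H)) ∧
    Tendsto (fun n : ℕ => ∑' l : ℕ, ((lam l + α n)⁻¹ * ⟪x, e l⟫_ℝ) • (e l : H))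
      atTop (𝓝 y) := by
  classical
  set r : lp (fun _ : ℕ => ℝ) 2 := e.repr y with hr
  have hrl : ∀ l, (r : ℕ → ℝ) l = ⟪e l, y⟫_ℝ := fun l => e.repr_apply_apply y l
  have hden : ∀ n l, 0 < lam l + α n := fun n l => add_pos (hlam l) (hα n)
  set c : ℕ → ℕ → ℝ := fun n l => (lam l + α n)⁻¹ * ⟪x, e l⟫_ℝ with hcdef
  have hxel : ∀ l, ⟪x, e l⟫_ℝ = lam l * (r : ℕ → ℝ) l := by
    intro l
    rw [hrl, ← hy, hsa, heig, inner_smul_right, real_inner_comm]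
  have hcr : ∀ n l, c n l = (lam l * (lam l + α n)⁻¹) * (r : ℕ → ℝ) l := by
    intro n l
    simp only [hcdef, hxel]
    ring
  have hfac_nonneg : ∀ n l, 0 ≤ lam l * (lam l + α n)⁻¹ :=
    fun n l => mul_nonneg (hlam l).le (inv_nonneg.2 (hden n l).le)
  have hfac_le : ∀ n l, lam l * (lam l + α n)⁻¹ ≤ 1 := by
    intro n l
    rw [mul_inv_le_iff₀ (hden n l), one_mul]
    linarith [(hα n)]
  have hcb : ∀ n l, |c n l| ≤ |(r : ℕ → ℝ) l| := by
    intro n l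
    rw [hcr, abs_mul, abs_of_nonneg (hfac_nonneg n l)]
    exact mul_le_of_le_one_left (abs_nonneg _) (hfac_le n l)
  -- summability of squares of r
  have htwo : ((2 : ℝ≥0∞).toReal) = (2 : ℝ) := by norm_num
  have hr2 : Summable fun l => ‖(r : ℕ → ℝ) l‖ ^ (2 : ℝ) := by
    have := (memℓp_gen_iff (p := 2) (by norm_num)).1 (lp.memℓp r)
    rwa [htwo] at this
  have hmem : ∀ n, Memℓp (c n) 2 := by
    intro n
    apply memℓp_gen
    rw [htwo]
    refine hr2.of_nonneg_of_le (fun l => Real.rpow_nonneg (norm_nonneg _) _) ?_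
    intro l
    exact Real.rpow_le_rpow (norm_nonneg _) (hcb n l) (by norm_num)
  set f : ℕ → lp (fun _ : ℕ => ℝ) 2 := fun n => ⟨c n, hmem n⟩ with hfdef
  have hhs : ∀ n, HasSum (fun l => c n l • (e l : H)) (e.repr.symm (f n)) := by
    intro n
    exact e.hasSum_repr_symm (f n)
  refine ⟨fun n => (hhs n).summable, ?_⟩
  have hteq : (fun n : ℕ => ∑' l : ℕ, ((lam l + α n)⁻¹ * ⟪x, e l⟫_ℝ) • (e l : H))
      = fun n => e.repr.symm (f n) := by
    funext n
    exact (hhs n).tsum_eq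
  rw [hteq]
  have hy' : e.repr.symm r = y := e.repr.symm_apply_apply y
  rw [← hy']
  refine (e.repr.symm.continuous.tendsto r).comp ?_
  -- show f n → r in lp
  rw [tendsto_iff_norm_sub_tendsto_zero]
  have hnorm2 : ∀ n, ‖f n - r‖ ^ (2 : ℝ) = ∑' l, ‖c n l - (r : ℕ → ℝ) l‖ ^ (2 : ℝ) := by
    intro n
    have := lp.norm_rpow_eq_tsum (p := 2) (by norm_num) (f n - r)
    rw [htwo] at this
    rw [this]
    exact tsum_congr fun l => by rw [lp.coeFn_sub, Pi.sub_apply]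
  have hsq : Tendsto (fun n => ‖f n - r‖ ^ (2 : ℝ)) atTop (𝓝 0) := by
    simp only [hnorm2]
    have h0 : (0 : ℝ) = ∑' _ : ℕ, (0 : ℝ) := by rw [tsum_zero]
    rw [h0]
    refine tendsto_tsum_of_dominated_convergence hr2 ?_ ?_
    · intro l
      have hclim : Tendsto (fun n => c n l) atTop (𝓝 ((r : ℕ → ℝ) l)) := by
        simp only [hcr]
        have h1 : Tendsto (fun n => lam l + α n) atTop (𝓝 (lam l)) := by
          simpa using (tendsto_const_nhds.add hα0)
        have h2 : Tendsto (fun n => lam l * (lam l + α n)⁻¹) atTop (𝓝 1) := by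
          have := (h1.inv₀ (hlam l).ne').const_mul (lam l)
          rwa [mul_inv_cancel₀ (hlam l).ne'] at this
        simpa using h2.mul_const ((r : ℕ → ℝ) l)
      have : Tendsto (fun n => ‖c n l - (r : ℕ → ℝ) l‖ ^ (2 : ℝ)) atTop
          (𝓝 (‖(r : ℕ → ℝ) l - (r : ℕ → ℝ) l‖ ^ (2 : ℝ))) := by
        exact ((hclim.sub_const _).norm).rpow_const (Or.inr (by norm_num))
      simpa using this
    · refine Eventually.of_forall fun n => fun l => ?_
      have hd : |c n l - (r : ℕ → ℝ) l| ≤ |(r : ℕ → ℝ) l| := by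
        have : c n l - (r : ℕ → ℝ) l = (lam l * (lam l + α n)⁻¹ - 1) * (r : ℕ → ℝ) l := by
          rw [hcr]; ring
        rw [this, abs_mul]
        refine mul_le_of_le_one_left (abs_nonneg _) ?_
        rw [abs_le]
        constructor
        · linarith [hfac_nonneg n l]
        · linarith [hfac_le n l]
      have : ‖c n l - (r : ℕ → ℝ) l‖ ^ (2:ℝ) ≤ ‖(r : ℕ → ℝ) l‖ ^ (2:ℝ) :=
        Real.rpow_le_rpow (norm_nonneg _) hd (by norm_num)
      calc ‖‖c n l - (r : ℕ → ℝ) l‖ ^ (2:ℝ)‖ = ‖c n l - (r : ℕ → ℝ) l‖ ^ (2:ℝ) := by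
            rw [Real.norm_of_nonneg (Real.rpow_nonneg (norm_nonneg _) _)]
        _ ≤ ‖(r : ℕ → ℝ) l‖ ^ (2:ℝ) := this
  -- deduce norm → 0 from norm² → 0
  have hfin : Tendsto (fun n => Real.sqrt (‖f n - r‖ ^ (2 : ℝ))) atTop (𝓝 (Real.sqrt 0)) :=
    (Real.continuous_sqrt.tendsto 0).comp hsq
  rw [Real.sqrt_zero] at hfin
  refine hfin.congr fun n => ?_
  rw [show (2:ℝ) = ((2:ℕ):ℝ) by norm_num, Real.rpow_natCast, Real.sqrt_sq (norm_nonneg _)]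
end

section
/- Let Γ be a compact, self-adjoint, positive, injective bounded operator on H with orthonormal basis (e_l)_{l∈ℕ} of eigenvectors, Γ e_l = λ_l e_l, λ_l > 0, and let (α_n) be a sequence of positive real numbers decreasing to 0. Then for every x in the range of Γ, the Tikhonov regularized inverse satisfies: for each n the series Σ_{l=0}^∞ (λ_l/(λ_l² + α_n)) ⟨x, e_l⟩ e_l converges in H, and its sum tends to Γ^{-1}x as n → ∞. -/
open Filter Topology
open scoped InnerProductSpace ENNReal lp

/-- convergence of the Tikhonov regularized inverse: for `x` in the range of
`Γ` with `Γ y = x` and `α_n ↓ 0`, each series `Σ_l (λ_l/(λ_l² + α_n)) ⟪x, e_l⟫ e_l` converges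
in `H` and its sum tends to `y = Γ⁻¹ x`. -/
theorem tikhonov_regularized_inverse_converges
    {H : Type*} [NormedAddCommGroup H] [InnerProductSpace ℝ H] [CompleteSpace H]
    (Γ : H →L[ℝ] H) (hcomp : IsCompactOperator Γ)
    (hsa : ∀ x y : H, ⟪Γ x, y⟫_ℝ = ⟪x, Γ y⟫_ℝ)
    (hpos : ∀ x : H, 0 ≤ ⟪Γ x, x⟫_ℝ)
    (hinj : Function.Injective Γ)
    (e : HilbertBasis ℕ ℝ H) (lam : ℕ → ℝ)
    (heig : ∀ l, Γ (e l) = lam l • e l) (hlam : ∀ l, 0 < lam l)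
    (α : ℕ → ℝ) (hα : ∀ n, 0 < α n) (hαmono : Antitone α)
    (hα0 : Tendsto α atTop (𝓝 0))
    (x y : H) (hy : Γ y = x) :
    (∀ n : ℕ, Summable fun l : ℕ => ((lam l / (lam l ^ 2 + α n)) * ⟪x, e l⟫_ℝ) • (e l : H)) ∧
    Tendsto (fun n : ℕ => ∑' l : ℕ, ((lam l / (lam l ^ 2 + α n)) * ⟪x, e l⟫_ℝ) • (e l : H))
      atTop (𝓝 y) := by
  set a : ℓ²(ℕ, ℝ) := e.repr y with ha
  have hden : ∀ n l, 0 < lam l ^ 2 + α n := fun n l => by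
    have := hlam l; have := hα n; positivity
  -- coefficient identity
  have hxl : ∀ l, ⟪x, e l⟫_ℝ = lam l * ⟪y, e l⟫_ℝ := by
    intro l
    rw [← hy, hsa, heig, real_inner_smul_right]
  have hal : ∀ l, (a : ℕ → ℝ) l = ⟪y, e l⟫_ℝ := by
    intro l
    rw [ha, e.repr_apply_apply, real_inner_comm]
  have key : ∀ n l, (lam l / (lam l ^ 2 + α n)) * ⟪x, e l⟫_ℝ
      = (lam l ^ 2 / (lam l ^ 2 + α n)) * (a : ℕ → ℝ) l := by
    intro n l
    rw [hxl, hal]; ring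
  -- the ratio bound
  have hratio : ∀ n l, 0 ≤ lam l ^ 2 / (lam l ^ 2 + α n) ∧
      lam l ^ 2 / (lam l ^ 2 + α n) ≤ 1 := by
    intro n l
    have h1 := hlam l
    have h2 := hα n
    constructor
    · positivity
    · rw [div_le_one (hden n l)]; linarith
  have hle : ∀ n l, ‖(lam l / (lam l ^ 2 + α n)) * ⟪x, e l⟫_ℝ‖ ≤ ‖(a : ℕ → ℝ) l‖ := by
    intro n l
    rw [key, norm_mul]
    have h := hratio n l
    calc ‖lam l ^ 2 / (lam l ^ 2 + α n)‖ * ‖(a : ℕ → ℝ) l‖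
        = (lam l ^ 2 / (lam l ^ 2 + α n)) * ‖(a : ℕ → ℝ) l‖ := by
          rw [Real.norm_of_nonneg h.1]
      _ ≤ 1 * ‖(a : ℕ → ℝ) l‖ := by
          apply mul_le_mul_of_nonneg_right h.2 (norm_nonneg _)
      _ = ‖(a : ℕ → ℝ) l‖ := one_mul _
  -- summability of squared coefficients of a
  have htR : ((2 : ℝ≥0∞).toReal) = ((2 : ℕ) : ℝ) := by norm_num
  have ha2 : Summable fun l => ‖(a : ℕ → ℝ) l‖ ^ 2 := by
    have h := (memℓp_gen_iff (p := 2) (by norm_num)).1 a.2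
    simp only [htR, Real.rpow_natCast] at h
    exact h
  -- membership
  have hmem : ∀ n, Memℓp (fun l => (lam l / (lam l ^ 2 + α n)) * ⟪x, e l⟫_ℝ) 2 := by
    intro n
    apply memℓp_gen
    have : Summable fun l => ‖(lam l / (lam l ^ 2 + α n)) * ⟪x, e l⟫_ℝ‖ ^ 2 := by
      apply Summable.of_nonneg_of_le (fun l => by positivity) _ ha2
      intro l
      exact pow_le_pow_left₀ (norm_nonneg _) (hle n l) 2
    simp only [htR, Real.rpow_natCast]
    exact this
  set F : ℕ → ℓ²(ℕ, ℝ) := fun n => ⟨_, hmem n⟩ with hF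
  have hFsum : ∀ n, HasSum (fun l => ((lam l / (lam l ^ 2 + α n)) * ⟪x, e l⟫_ℝ) • (e l : H))
      (e.repr.symm (F n)) := fun n => e.hasSum_repr_symm (F n)
  refine ⟨fun n => (hFsum n).summable, ?_⟩
  have htsum : ∀ n, (∑' l : ℕ, ((lam l / (lam l ^ 2 + α n)) * ⟪x, e l⟫_ℝ) • (e l : H))
      = e.repr.symm (F n) := fun n => (hFsum n).tsum_eq
  simp only [htsum]
  -- norm computation
  have hnorm : ∀ n, ‖e.repr.symm (F n) - y‖ = ‖F n - a‖ := by
    intro n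
    have : y = e.repr.symm a := (e.repr.symm_apply_apply y).symm
    rw [this, ← map_sub, LinearIsometryEquiv.norm_map]
  have hFal : ∀ n l, ((F n - a : ℓ²(ℕ, ℝ)) : ℕ → ℝ) l
      = -(α n / (lam l ^ 2 + α n)) * (a : ℕ → ℝ) l := by
    intro n l
    have : ((F n - a : ℓ²(ℕ, ℝ)) : ℕ → ℝ) l = ((F n : ℕ → ℝ) l) - (a : ℕ → ℝ) l := rfl
    rw [this]
    show (lam l / (lam l ^ 2 + α n)) * ⟪x, e l⟫_ℝ - (a : ℕ → ℝ) l = _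
    rw [key]
    have h1 : lam l ^ 2 / (lam l ^ 2 + α n) = 1 - α n / (lam l ^ 2 + α n) := by
      rw [eq_sub_iff_add_eq, ← add_div, div_self (hden n l).ne']
    rw [h1]; ring
  have hsq : ∀ n, ‖F n - a‖ ^ 2 = ∑' l, (α n / (lam l ^ 2 + α n)) ^ 2 * ((a : ℕ → ℝ) l) ^ 2 := by
    intro n
    have h2 := lp.norm_rpow_eq_tsum (p := 2) (by norm_num) (F n - a)
    have hterm : ∀ l, ‖((F n - a : ℓ²(ℕ, ℝ)) : ℕ → ℝ) l‖ ^ ((2 : ℝ≥0∞).toReal)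
        = (α n / (lam l ^ 2 + α n)) ^ 2 * ((a : ℕ → ℝ) l) ^ 2 := by
      intro l
      rw [hFal]
      rw [htR, Real.rpow_natCast, norm_mul, mul_pow, Real.norm_eq_abs, Real.norm_eq_abs,
        sq_abs, sq_abs, neg_pow]
      ring
    simp only [htR, Real.rpow_natCast] at h2 hterm
    rw [h2]
    exact tsum_congr hterm
  -- dominated convergence for the squared norms
  have hbd : ∀ n l, ‖(α n / (lam l ^ 2 + α n)) ^ 2 * ((a : ℕ → ℝ) l) ^ 2‖
      ≤ ‖(a : ℕ → ℝ) l‖ ^ 2 := by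
    intro n l
    have hd := hden n l
    have h1 : 0 ≤ α n / (lam l ^ 2 + α n) := div_nonneg (hα n).le hd.le
    have h2 : α n / (lam l ^ 2 + α n) ≤ 1 := by
      rw [div_le_one (hden n l)]
      nlinarith [hlam l]
    rw [Real.norm_eq_abs, abs_mul, abs_pow, abs_pow]
    calc |α n / (lam l ^ 2 + α n)| ^ 2 * |(a : ℕ → ℝ) l| ^ 2
        ≤ 1 ^ 2 * |(a : ℕ → ℝ) l| ^ 2 := by
          apply mul_le_mul_of_nonneg_right _ (by positivity)
          apply pow_le_pow_left₀ (abs_nonneg _) (abs_le.2 ⟨by linarith, h2⟩)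
      _ = ‖(a : ℕ → ℝ) l‖ ^ 2 := by rw [Real.norm_eq_abs]; ring
  have hptwise : ∀ l, Tendsto (fun n => (α n / (lam l ^ 2 + α n)) ^ 2 * ((a : ℕ → ℝ) l) ^ 2)
      atTop (𝓝 0) := by
    intro l
    have hne : lam l ^ 2 + 0 ≠ 0 := by simpa using (pow_pos (hlam l) 2).ne'
    have hdiv : Tendsto (fun n => α n / (lam l ^ 2 + α n)) atTop (𝓝 (0 / (lam l ^ 2 + 0))) :=
      hα0.div (tendsto_const_nhds.add hα0) hne
    simp only [zero_div] at hdiv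
    have := ((hdiv.pow 2).mul_const (((a : ℕ → ℝ) l) ^ 2))
    simpa using this
  have hdom : Tendsto (fun n => ∑' l, (α n / (lam l ^ 2 + α n)) ^ 2 * ((a : ℕ → ℝ) l) ^ 2)
      atTop (𝓝 (∑' _ : ℕ, (0 : ℝ))) := by
    apply tendsto_tsum_of_dominated_convergence ha2 hptwise
    exact Eventually.of_forall fun n => hbd n
  rw [tsum_zero] at hdom
  have hsqt : Tendsto (fun n => ‖F n - a‖ ^ 2) atTop (𝓝 0) := by
    simpa only [← hsq] using hdom
  have hnt : Tendsto (fun n => ‖F n - a‖) atTop (𝓝 0) := by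
    have := hsqt.sqrt
    simpa [Real.sqrt_sq (norm_nonneg _)] using this
  rw [tendsto_iff_norm_sub_tendsto_zero]
  simpa only [hnorm] using hnt
end

section
/- Let ρ be a bounded linear operator on H with ‖ρ^p‖_∞ ≤ a·b^p for some a > 0, b ∈ [0,1) and all p, let (ε_n)_{n∈ℤ} be a strong H-white noise, and let X_n = Σ_{j=0}^∞ ρ^j(ε_{n−j}) be the stationary ARH(1) process. Let Γ = E(X_0 ⊗ X_0) and Γ_ε = E(ε_0 ⊗ ε_0). Then the covariance operator satisfies Γ = ρ ∘ Γ ∘ ρ* + Γ_ε. -/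
open MeasureTheory ProbabilityTheory Filter Topology
open scoped InnerProductSpace
open scoped ENNReal NNReal

set_option linter.unusedSectionVars false
set_option maxHeartbeats 1000000

noncomputable section

variable {Ω : Type*} [MeasureSpace Ω] [IsProbabilityMeasure (ℙ : Measure Ω)]
variable {H : Type*} [NormedAddCommGroup H] [InnerProductSpace ℝ H] [CompleteSpace H]
  [SecondCountableTopology H] [MeasurableSpace H] [BorelSpace H]

lemma integrable_mul_of_memL2 {f g : Ω → ℝ} (hf : MemLp f 2 ℙ) (hg : MemLp g 2 ℙ) :
    Integrable (fun ω => f ω * g ω) ℙ := by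
  have h := L2.integrable_inner (𝕜 := ℝ) (hf.toLp f) (hg.toLp g)
  refine h.congr ?_
  filter_upwards [hf.coeFn_toLp, hg.coeFn_toLp] with ω h1 h2
  simp [h1, h2, RCLike.inner_apply, mul_comm]

lemma tendsto_integral_mul_of_L2 {f g : ℕ → Ω → ℝ} {F G : Ω → ℝ}
    (hf : ∀ m, MemLp (f m) 2 ℙ) (hg : ∀ m, MemLp (g m) 2 ℙ)
    (hF : MemLp F 2 ℙ) (hG : MemLp G 2 ℙ)
    (h1 : Tendsto (fun m => eLpNorm (f m - F) 2 ℙ) atTop (𝓝 0))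
    (h2 : Tendsto (fun m => eLpNorm (g m - G) 2 ℙ) atTop (𝓝 0)) :
    Tendsto (fun m => ∫ ω, f m ω * g m ω ∂ℙ) atTop (𝓝 (∫ ω, F ω * G ω ∂ℙ)) := by
  set Fm : ℕ → Lp ℝ 2 (ℙ : Measure Ω) := fun m => (hf m).toLp (f m) with hFm
  set Gm : ℕ → Lp ℝ 2 (ℙ : Measure Ω) := fun m => (hg m).toLp (g m) with hGm
  set FF : Lp ℝ 2 (ℙ : Measure Ω) := hF.toLp F with hFL
  set GG : Lp ℝ 2 (ℙ : Measure Ω) := hG.toLp G with hGL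
  have key : ∀ (u : ℕ → Ω → ℝ) (U : Ω → ℝ) (hu : ∀ m, MemLp (u m) 2 ℙ) (hU : MemLp U 2 ℙ),
      Tendsto (fun m => eLpNorm (u m - U) 2 ℙ) atTop (𝓝 0) →
      Tendsto (fun m => (hu m).toLp (u m)) atTop (𝓝 (hU.toLp U)) := by
    intro u U hu hU h
    rw [tendsto_iff_norm_sub_tendsto_zero]
    have hnorm : ∀ m, ‖(hu m).toLp (u m) - hU.toLp U‖ = (eLpNorm (u m - U) 2 ℙ).toReal := by
      intro m
      rw [← MemLp.toLp_sub (hu m) hU, Lp.norm_toLp]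
    simp_rw [hnorm]
    have := (ENNReal.tendsto_toReal (by simp : (0:ℝ≥0∞) ≠ ∞)).comp h
    simpa [Function.comp_def] using this
  have hFt := key f F hf hF h1
  have hGt := key g G hg hG h2
  have hinner := hFt.inner hGt (𝕜 := ℝ)
  have e1 : ∀ m, (inner ℝ (Fm m) (Gm m) : ℝ) = ∫ ω, f m ω * g m ω ∂ℙ := by
    intro m
    rw [L2.inner_def]
    refine integral_congr_ae ?_
    filter_upwards [(hf m).coeFn_toLp, (hg m).coeFn_toLp] with ω e1 e2
    simp [hFm, hGm, e1, e2, RCLike.inner_apply, mul_comm]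
  have e2 : (inner ℝ FF GG : ℝ) = ∫ ω, F ω * G ω ∂ℙ := by
    rw [L2.inner_def]
    refine integral_congr_ae ?_
    filter_upwards [hF.coeFn_toLp, hG.coeFn_toLp] with ω e1 e2
    simp [hFL, hGL, e1, e2, RCLike.inner_apply, mul_comm]
  rw [← e2]
  exact Tendsto.congr (fun m => e1 m) hinner

/-- the covariance operator of the stationary ARH(1) process satisfies
`Γ = ρ Γ ρ* + Γ_ε`. -/
theorem arh1_covariance_equation
    (ρ : H →L[ℝ] H) (a b : ℝ) (ha : 0 < a) (hb : b ∈ Set.Ico (0 : ℝ) 1)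
    (hρ : ∀ p : ℕ, ‖ρ ^ p‖ ≤ a * b ^ p)
    (ε : ℤ → Ω → H) (hε : IsStrongWhiteNoise ε)
    (X : ℤ → Ω → H) (hXmeas : ∀ n, Measurable (X n))
    (hX : ∀ n : ℤ, ∀ᵐ ω ∂ℙ,
      Tendsto (fun m : ℕ => ∑ j ∈ Finset.range (m + 1), (ρ ^ j) (ε (n - j) ω))
        atTop (𝓝 (X n ω)))
    (hAR : ∀ n : ℤ, ∀ᵐ ω ∂ℙ, X n ω = ρ (X (n - 1) ω) + ε n ω)
    (hX2 : MemLp (X 0) 2 ℙ)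
    (Γ : H →L[ℝ] H)
    (hΓ : ∀ x y : H, ⟪Γ x, y⟫_ℝ = ∫ ω, ⟪X 0 ω, x⟫_ℝ * ⟪X 0 ω, y⟫_ℝ ∂ℙ)
    (Γε : H →L[ℝ] H)
    (hΓε : ∀ x y : H, ⟪Γε x, y⟫_ℝ = ∫ ω, ⟪ε 0 ω, x⟫_ℝ * ⟪ε 0 ω, y⟫_ℝ ∂ℙ) :
    Γ = ρ ∘L Γ ∘L ContinuousLinearMap.adjoint ρ + Γε := by
  obtain ⟨hb0, hb1⟩ := hb
  set A : ℕ → H →L[ℝ] H := fun j => ContinuousLinearMap.adjoint (ρ ^ j) with hA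
  set c : ℕ → H → H → ℝ :=
    fun j u v => ∫ ω, ⟪ε 0 ω, A j u⟫_ℝ * ⟪ε 0 ω, A j v⟫_ℝ ∂ℙ with hc
  set S : ℕ → Ω → H := fun m ω => ∑ j ∈ Finset.range (m + 1), (ρ ^ j) (ε (0 - j) ω) with hS
  have hmeasε := hε.meas
  -- identical L2 norms
  have hεnorm : ∀ k, eLpNorm (ε k) 2 ℙ = eLpNorm (ε 0) 2 ℙ := by
    intro k
    have h1 : eLpNorm (ε k) 2 ℙ = eLpNorm (id ∘ ε k) 2 ℙ := rfl
    have h2 : eLpNorm (ε 0) 2 ℙ = eLpNorm (id ∘ ε 0) 2 ℙ := rfl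
    rw [h1, ← eLpNorm_map_measure aestronglyMeasurable_id (hmeasε k).aemeasurable, hε.ident k,
      eLpNorm_map_measure aestronglyMeasurable_id (hmeasε 0).aemeasurable, ← h2]
  have hε2 : ∀ k, MemLp (ε k) 2 ℙ :=
    fun k => ⟨(hmeasε k).aestronglyMeasurable, by rw [hεnorm k]; exact hε.sqInt.2⟩
  have hεint : ∀ k, Integrable (ε k) ℙ := fun k => (hε2 k).integrable one_le_two
  have hεmean : ∀ k, ∫ ω, ε k ω ∂ℙ = 0 := by
    intro k
    have h1 : ∫ ω, ε k ω ∂ℙ = ∫ w, id w ∂(Measure.map (ε k) ℙ) :=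
      (integral_map (hmeasε k).aemeasurable aestronglyMeasurable_id).symm
    rw [h1, hε.ident k, integral_map (hmeasε 0).aemeasurable aestronglyMeasurable_id]
    exact hε.centered
  have hinnerzero : ∀ (k : ℤ) (w : H), ∫ ω, ⟪ε k ω, w⟫_ℝ ∂ℙ = 0 := by
    intro k w
    have h : ∀ ω, ⟪ε k ω, w⟫_ℝ = ⟪w, ε k ω⟫_ℝ := fun ω => real_inner_comm _ _
    simp_rw [h]
    rw [integral_inner (hεint k) w, hεmean k, inner_zero_right]
  -- membership in L2 of inner functionals
  have hinnerL2 : ∀ {Z : Ω → H}, MemLp Z 2 ℙ → ∀ w : H,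
      MemLp (fun ω => ⟪Z ω, w⟫_ℝ) 2 ℙ := by
    intro Z hZ w
    refine MemLp.of_le_mul (c := ‖w‖) hZ
      ((Continuous.inner continuous_id continuous_const).comp_aestronglyMeasurable
        hZ.aestronglyMeasurable) ?_
    filter_upwards with ω
    calc ‖⟪Z ω, w⟫_ℝ‖ = |⟪Z ω, w⟫_ℝ| := rfl
      _ ≤ ‖Z ω‖ * ‖w‖ := abs_real_inner_le_norm _ _
      _ = ‖w‖ * ‖Z ω‖ := mul_comm _ _
  have hterm2 : ∀ j : ℕ, MemLp (fun ω => (ρ ^ j) (ε (0 - (j:ℤ)) ω)) 2 ℙ :=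
    fun j => (ρ ^ j).comp_memLp' (hε2 _)
  have hS2 : ∀ m, MemLp (S m) 2 ℙ := fun m =>
    memLp_finset_sum (Finset.range (m + 1)) (fun j _ => hterm2 j)
  set E2 : ℝ≥0∞ := eLpNorm (ε 0) 2 ℙ with hE2def
  have hE2 : E2 ≠ ∞ := hε.sqInt.2.ne
  have htermnorm : ∀ j : ℕ,
      eLpNorm (fun ω => (ρ ^ j) (ε (0 - (j:ℤ)) ω)) 2 ℙ ≤ ENNReal.ofReal (a * b ^ j) * E2 := by
    intro j
    have hab : 0 ≤ a * b ^ j := mul_nonneg ha.le (pow_nonneg hb0 j)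
    have hc' : ∀ᵐ ω ∂(ℙ : Measure Ω),
        ‖(ρ ^ j) (ε (0 - (j:ℤ)) ω)‖ ≤ ((a * b ^ j).toNNReal : ℝ) * ‖ε (0 - (j:ℤ)) ω‖ := by
      filter_upwards with ω
      rw [Real.coe_toNNReal _ hab]
      exact le_trans ((ρ ^ j).le_opNorm _)
        (mul_le_mul_of_nonneg_right (hρ j) (norm_nonneg _))
    have h := eLpNorm_le_nnreal_smul_eLpNorm_of_ae_le_mul hc' 2
    rw [ENNReal.smul_def, smul_eq_mul, hεnorm] at h
    exact h
  have hgeom : ∀ m m' : ℕ, ∑ j ∈ Finset.Ico (m+1) (m'+1), a * b ^ j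
      ≤ a * b ^ (m+1) * (1 - b)⁻¹ := by
    intro m m'
    rw [← Finset.mul_sum, mul_assoc]
    refine mul_le_mul_of_nonneg_left ?_ ha.le
    calc ∑ j ∈ Finset.Ico (m+1) (m'+1), b ^ j
        = ∑ i ∈ Finset.range (m' + 1 - (m+1)), b ^ (m+1+i) :=
          Finset.sum_Ico_eq_sum_range _ _ _
      _ = b ^ (m+1) * ∑ i ∈ Finset.range (m' + 1 - (m+1)), b ^ i := by
          rw [Finset.mul_sum]
          exact Finset.sum_congr rfl (fun i _ => pow_add b (m+1) i)
      _ ≤ b ^ (m+1) * (1 - b)⁻¹ := by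
          refine mul_le_mul_of_nonneg_left ?_ (pow_nonneg hb0 _)
          calc ∑ i ∈ Finset.range (m' + 1 - (m+1)), b ^ i
              ≤ ∑' i : ℕ, b ^ i := Summable.sum_le_tsum _ (fun i _ => pow_nonneg hb0 i)
                  (summable_geometric_of_lt_one hb0 hb1)
            _ = (1 - b)⁻¹ := tsum_geometric_of_lt_one hb0 hb1
  have haux : ∀ m m' : ℕ, m ≤ m' → eLpNorm (fun ω => S m' ω - S m ω) 2 ℙ
      ≤ ENNReal.ofReal (a * b ^ (m+1) * (1 - b)⁻¹) * E2 := by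
    intro m m' hmm'
    have hsplit : (fun ω => S m' ω - S m ω)
        = ∑ j ∈ Finset.Ico (m+1) (m'+1), (fun ω => (ρ ^ j) (ε (0 - (j:ℤ)) ω)) := by
      funext ω
      rw [Finset.sum_apply]
      rw [Finset.sum_Ico_eq_sub _ (by omega : m + 1 ≤ m' + 1)]
    calc eLpNorm (fun ω => S m' ω - S m ω) 2 ℙ
        = eLpNorm (∑ j ∈ Finset.Ico (m+1) (m'+1),
            (fun ω => (ρ ^ j) (ε (0 - (j:ℤ)) ω))) 2 ℙ := by rw [hsplit]
      _ ≤ ∑ j ∈ Finset.Ico (m+1) (m'+1),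
            eLpNorm (fun ω => (ρ ^ j) (ε (0 - (j:ℤ)) ω)) 2 ℙ :=
          eLpNorm_sum_le (fun j _ => (hterm2 j).aestronglyMeasurable) one_le_two
      _ ≤ ∑ j ∈ Finset.Ico (m+1) (m'+1), ENNReal.ofReal (a * b ^ j) * E2 :=
          Finset.sum_le_sum (fun j _ => htermnorm j)
      _ = ENNReal.ofReal (∑ j ∈ Finset.Ico (m+1) (m'+1), a * b ^ j) * E2 := by
          rw [← Finset.sum_mul, ← ENNReal.ofReal_sum_of_nonneg
            (fun j _ => mul_nonneg ha.le (pow_nonneg hb0 j))]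
      _ ≤ ENNReal.ofReal (a * b ^ (m+1) * (1 - b)⁻¹) * E2 :=
          mul_le_mul_left (ENNReal.ofReal_le_ofReal (hgeom m m')) E2
  have hXS : Tendsto (fun m => eLpNorm (fun ω => X 0 ω - S m ω) 2 ℙ) atTop (𝓝 0) := by
    have hbound : ∀ m, eLpNorm (fun ω => X 0 ω - S m ω) 2 ℙ
        ≤ ENNReal.ofReal (a * b ^ (m+1) * (1 - b)⁻¹) * E2 := by
      intro m
      have hae : ∀ᵐ ω ∂(ℙ : Measure Ω),
          Tendsto (fun m' => S m' ω - S m ω) atTop (𝓝 (X 0 ω - S m ω)) := by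
        filter_upwards [hX 0] with ω hω
        exact hω.sub_const (S m ω)
      have hfat := Lp.eLpNorm_lim_le_liminf_eLpNorm (μ := (ℙ : Measure Ω)) (p := 2)
        (f := fun m' ω => S m' ω - S m ω)
        (fun m' => ((hS2 m').sub (hS2 m)).aestronglyMeasurable)
        (fun ω => X 0 ω - S m ω) hae
      refine hfat.trans ?_
      have hev : ∀ᶠ m' in atTop, eLpNorm (fun ω => S m' ω - S m ω) 2 ℙ
          ≤ ENNReal.ofReal (a * b ^ (m+1) * (1 - b)⁻¹) * E2 :=
        eventually_atTop.2 ⟨m, fun m' h => haux m m' h⟩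
      calc atTop.liminf (fun m' => eLpNorm (fun ω => S m' ω - S m ω) 2 ℙ)
          ≤ atTop.liminf (fun _ => ENNReal.ofReal (a * b ^ (m+1) * (1 - b)⁻¹) * E2) :=
            Filter.liminf_le_liminf hev
        _ = ENNReal.ofReal (a * b ^ (m+1) * (1 - b)⁻¹) * E2 := Filter.liminf_const _
    have hzero : Tendsto (fun m : ℕ => ENNReal.ofReal (a * b ^ (m+1) * (1 - b)⁻¹) * E2)
        atTop (𝓝 0) := by
      have h1 : Tendsto (fun m : ℕ => a * b ^ (m+1) * (1 - b)⁻¹) atTop (𝓝 0) := by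
        have hb' : Tendsto (fun m : ℕ => b ^ (m+1)) atTop (𝓝 0) :=
          (tendsto_pow_atTop_nhds_zero_of_lt_one hb0 hb1).comp (tendsto_add_atTop_nat 1)
        have := (hb'.const_mul a).mul_const (1 - b)⁻¹
        simpa using this
      have h2 := ENNReal.Tendsto.mul_const (ENNReal.tendsto_ofReal h1) (Or.inr hE2)
      simpa using h2
    exact tendsto_of_tendsto_of_tendsto_of_le_of_le tendsto_const_nhds hzero
      (fun m => zero_le) hbound
  -- inner products against rank-one directions
  have hadj : ∀ (j : ℕ) (w u : H), ⟪(ρ ^ j) w, u⟫_ℝ = ⟪w, A j u⟫_ℝ := by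
    intro j w u
    rw [real_inner_comm, ← ContinuousLinearMap.adjoint_inner_left, real_inner_comm]
  -- L2 convergence of projected partial sums
  have hfconv : ∀ u : H,
      Tendsto (fun m => eLpNorm
        ((fun ω => ⟪S m ω, u⟫_ℝ) - fun ω => ⟪X 0 ω, u⟫_ℝ) 2 ℙ) atTop (𝓝 0) := by
    intro u
    have hb' : ∀ m, eLpNorm ((fun ω => ⟪S m ω, u⟫_ℝ) - fun ω => ⟪X 0 ω, u⟫_ℝ) 2 ℙ
        ≤ (‖u‖₊ : ℝ≥0∞) * eLpNorm (fun ω => X 0 ω - S m ω) 2 ℙ := by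
      intro m
      have hptw : ∀ᵐ ω ∂(ℙ : Measure Ω),
          ‖((fun ω => ⟪S m ω, u⟫_ℝ) - fun ω => ⟪X 0 ω, u⟫_ℝ) ω‖
            ≤ (‖u‖₊ : ℝ) * ‖X 0 ω - S m ω‖ := by
        filter_upwards with ω
        have : ((fun ω => ⟪S m ω, u⟫_ℝ) - fun ω => ⟪X 0 ω, u⟫_ℝ) ω
            = -⟪X 0 ω - S m ω, u⟫_ℝ := by
          simp [inner_sub_left]
        rw [this, norm_neg]
        calc ‖⟪X 0 ω - S m ω, u⟫_ℝ‖ = |⟪X 0 ω - S m ω, u⟫_ℝ| := rfl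
          _ ≤ ‖X 0 ω - S m ω‖ * ‖u‖ := abs_real_inner_le_norm _ _
          _ = (‖u‖₊ : ℝ) * ‖X 0 ω - S m ω‖ := by rw [mul_comm]; rfl
      have h := eLpNorm_le_nnreal_smul_eLpNorm_of_ae_le_mul hptw 2
      rwa [ENNReal.smul_def, smul_eq_mul] at h
    have hzero : Tendsto (fun m => (‖u‖₊ : ℝ≥0∞) * eLpNorm (fun ω => X 0 ω - S m ω) 2 ℙ)
        atTop (𝓝 0) := by
      have := ENNReal.Tendsto.const_mul hXS (Or.inr (by simp : (‖u‖₊ : ℝ≥0∞) ≠ ∞))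
      simpa using this
    exact tendsto_of_tendsto_of_tendsto_of_le_of_le tendsto_const_nhds hzero
      (fun m => zero_le) hb'
  -- per-m expansion of the second moment of partial sums
  have hexp : ∀ (u v : H) (m : ℕ),
      ∫ ω, ⟪S m ω, u⟫_ℝ * ⟪S m ω, v⟫_ℝ ∂ℙ = ∑ j ∈ Finset.range (m+1), c j u v := by
    intro u v m
    have hsum : ∀ (w : H) (ω : Ω),
        ⟪S m ω, w⟫_ℝ = ∑ j ∈ Finset.range (m+1), ⟪ε (0 - (j:ℤ)) ω, A j w⟫_ℝ := by
      intro w ω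
      rw [hS]
      rw [sum_inner]
      exact Finset.sum_congr rfl (fun j _ => hadj j _ w)
    have hφ2 : ∀ (j : ℕ) (w : H), MemLp (fun ω => ⟪ε (0 - (j:ℤ)) ω, A j w⟫_ℝ) 2 ℙ :=
      fun j w => hinnerL2 (hε2 _) _
    have hint : ∀ (j k : ℕ),
        Integrable (fun ω => ⟪ε (0 - (j:ℤ)) ω, A j u⟫_ℝ * ⟪ε (0 - (k:ℤ)) ω, A k v⟫_ℝ) ℙ :=
      fun j k => integrable_mul_of_memL2 (hφ2 j u) (hφ2 k v)
    calc ∫ ω, ⟪S m ω, u⟫_ℝ * ⟪S m ω, v⟫_ℝ ∂ℙ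
        = ∫ ω, ∑ j ∈ Finset.range (m+1), ∑ k ∈ Finset.range (m+1),
            ⟪ε (0 - (j:ℤ)) ω, A j u⟫_ℝ * ⟪ε (0 - (k:ℤ)) ω, A k v⟫_ℝ ∂ℙ := by
          refine integral_congr_ae (Filter.Eventually.of_forall fun ω => ?_)
          show ⟪S m ω, u⟫_ℝ * ⟪S m ω, v⟫_ℝ = _
          rw [hsum u ω, hsum v ω, Finset.sum_mul_sum]
      _ = ∑ j ∈ Finset.range (m+1), ∫ ω, ∑ k ∈ Finset.range (m+1),
            ⟪ε (0 - (j:ℤ)) ω, A j u⟫_ℝ * ⟪ε (0 - (k:ℤ)) ω, A k v⟫_ℝ ∂ℙ :=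
          integral_finset_sum _ (fun j _ => integrable_finset_sum _ (fun k _ => hint j k))
      _ = ∑ j ∈ Finset.range (m+1), ∑ k ∈ Finset.range (m+1),
            ∫ ω, ⟪ε (0 - (j:ℤ)) ω, A j u⟫_ℝ * ⟪ε (0 - (k:ℤ)) ω, A k v⟫_ℝ ∂ℙ :=
          Finset.sum_congr rfl (fun j _ => integral_finset_sum _ (fun k _ => hint j k))
      _ = ∑ j ∈ Finset.range (m+1), c j u v := by
          refine Finset.sum_congr rfl (fun j hj => ?_)
          rw [Finset.sum_eq_single_of_mem j hj]
          · -- diagonal term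
            have hcont : Continuous (fun w : H => ⟪w, A j u⟫_ℝ * ⟪w, A j v⟫_ℝ) :=
              (continuous_id.inner continuous_const).mul
                (continuous_id.inner continuous_const)
            have h1 : ∫ ω, ⟪ε (0 - (j:ℤ)) ω, A j u⟫_ℝ * ⟪ε (0 - (j:ℤ)) ω, A j v⟫_ℝ ∂ℙ
                = ∫ w, ⟪w, A j u⟫_ℝ * ⟪w, A j v⟫_ℝ ∂(Measure.map (ε (0 - (j:ℤ))) ℙ) :=
              (integral_map (hmeasε _).aemeasurable
                hcont.aestronglyMeasurable).symm
            rw [h1, hε.ident, integral_map (hmeasε 0).aemeasurable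
              hcont.aestronglyMeasurable]
          · -- off-diagonal terms vanish
            intro k hk hkj
            have hne : (0 - (k:ℤ)) ≠ (0 - (j:ℤ)) := by
              intro h
              exact hkj (by omega)
            have hindep : IndepFun (fun ω => ⟪ε (0 - (j:ℤ)) ω, A j u⟫_ℝ)
                (fun ω => ⟪ε (0 - (k:ℤ)) ω, A k v⟫_ℝ) ℙ := by
              have h0 := hε.indep.indepFun hne.symm
              exact h0.comp (measurable_id.inner measurable_const)
                (measurable_id.inner measurable_const)
            have := hindep.integral_mul_eq_mul_integral
              ((measurable_id.inner measurable_const).comp (hmeasε _)).aestronglyMeasurable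
              ((measurable_id.inner measurable_const).comp (hmeasε _)).aestronglyMeasurable
            rw [show (fun ω => ⟪ε (0 - (j:ℤ)) ω, A j u⟫_ℝ * ⟪ε (0 - (k:ℤ)) ω, A k v⟫_ℝ)
                = (fun ω => ⟪ε (0 - (j:ℤ)) ω, A j u⟫_ℝ) * fun ω => ⟪ε (0 - (k:ℤ)) ω, A k v⟫_ℝ
                from rfl, this, hinnerzero, zero_mul]
  have hX0inner2 : ∀ u, MemLp (fun ω => ⟪X 0 ω, u⟫_ℝ) 2 ℙ := fun u => hinnerL2 hX2 u
  have hKey : ∀ u v : H, Tendsto (fun m => ∑ j ∈ Finset.range (m+1), c j u v)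
      atTop (𝓝 (⟪Γ u, v⟫_ℝ)) := by
    intro u v
    have ht := tendsto_integral_mul_of_L2
      (f := fun m ω => ⟪S m ω, u⟫_ℝ) (g := fun m ω => ⟪S m ω, v⟫_ℝ)
      (F := fun ω => ⟪X 0 ω, u⟫_ℝ) (G := fun ω => ⟪X 0 ω, v⟫_ℝ)
      (fun m => hinnerL2 (hS2 m) u) (fun m => hinnerL2 (hS2 m) v)
      (hX0inner2 u) (hX0inner2 v) (hfconv u) (hfconv v)
    rw [hΓ u v]
    exact Tendsto.congr (fun m => hexp u v m) ht
  have hshift : ∀ (j : ℕ) (u v : H), c (j+1) u v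
      = c j (ContinuousLinearMap.adjoint ρ u) (ContinuousLinearMap.adjoint ρ v) := by
    intro j u v
    have hAs : ∀ w, A (j+1) w = A j (ContinuousLinearMap.adjoint ρ w) := by
      intro w
      simp only [hA]
      rw [pow_succ', ContinuousLinearMap.mul_def, ContinuousLinearMap.adjoint_comp]
      rfl
    simp only [hc, hAs]
  have hc0 : ∀ u v : H, c 0 u v = ⟪Γε u, v⟫_ℝ := by
    intro u v
    rw [hΓε u v]
    simp only [hc, hA, pow_zero, ContinuousLinearMap.one_def,
      ContinuousLinearMap.adjoint_id, ContinuousLinearMap.coe_id', id_eq]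
  refine ContinuousLinearMap.ext fun x => ?_
  refine ext_inner_right ℝ fun y => ?_
  have h1 := (hKey x y).comp (tendsto_add_atTop_nat 1)
  have heq : ∀ m : ℕ, ∑ j ∈ Finset.range (m+1+1), c j x y
      = (∑ j ∈ Finset.range (m+1),
          c j (ContinuousLinearMap.adjoint ρ x) (ContinuousLinearMap.adjoint ρ y))
        + c 0 x y := by
    intro m
    rw [Finset.sum_range_succ']
    congr 1
    exact Finset.sum_congr rfl (fun j _ => hshift j x y)
  have h1' : Tendsto (fun m : ℕ => (∑ j ∈ Finset.range (m+1),
      c j (ContinuousLinearMap.adjoint ρ x) (ContinuousLinearMap.adjoint ρ y))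
        + c 0 x y) atTop (𝓝 (⟪Γ x, y⟫_ℝ)) :=
    Tendsto.congr heq h1
  have h2' := (hKey (ContinuousLinearMap.adjoint ρ x)
    (ContinuousLinearMap.adjoint ρ y)).add_const (c 0 x y)
  have hfinal := tendsto_nhds_unique h1' h2'
  rw [hc0] at hfinal
  rw [hfinal]
  simp only [ContinuousLinearMap.add_apply, ContinuousLinearMap.comp_apply,
    inner_add_left, ContinuousLinearMap.adjoint_inner_right]
end
end
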